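/- arXiv:0906.2954 — 3 statements merged into one kernel-verified Lean document; each statement's English description precedes it below -/
import Mathlib

section
/- In the free symmetric bimonoidal intermuting category M generated by a set of objects, every arrow term is equal to a developed arrow term, i.e., a composition f_n ∘ … ∘ f₁ ∘ 1_A where each f_i is built from identities and exactly one occurrence of a primitive arrow (an associativity b, symmetry c, unit isomorphism δ or σ, intermutation cᵏ, a w-arrow, or κ) by applying ∨ and ∧. -/
namespace SMI

/-- Objects of the free symmetric bimonoidal intermuting category 𝓜 :
propositional formulas over an infinite set of letters (indexed by ℕ),
the constants ⊥ and ⊤, and the connectives ∨ and ∧. -/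
inductive Frm : Type
  | pl : ℕ → Frm
  | bot : Frm
  | top : Frm
  | or : Frm → Frm → Frm
  | and : Frm → Frm → Frm
  deriving DecidableEq

/-- Arrow terms of 𝓜 , generated from the primitive arrow terms
(associativity b, symmetry c, unit isomorphisms δ and σ, intermutation cᵏ,
the w-arrows and κ) by composition, ∨ and ∧.  The suffixes `To`/`From`
record the direction (`→`/`←`) of the corresponding isomorphism. -/
inductive Tm : Frm → Frm → Type
  | id (A : Frm) : Tm A A
  | comp {A B C : Frm} : Tm B C → Tm A B → Tm A C
  | orM {A B C D : Frm} : Tm A B → Tm C D → Tm (A.or C) (B.or D)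
  | andM {A B C D : Frm} : Tm A B → Tm C D → Tm (A.and C) (B.and D)
  | bOrTo (A B C : Frm) : Tm (A.or (B.or C)) ((A.or B).or C)
  | bOrFrom (A B C : Frm) : Tm ((A.or B).or C) (A.or (B.or C))
  | bAndTo (A B C : Frm) : Tm (A.and (B.and C)) ((A.and B).and C)
  | bAndFrom (A B C : Frm) : Tm ((A.and B).and C) (A.and (B.and C))
  | cOr (A B : Frm) : Tm (A.or B) (B.or A)
  | cAnd (A B : Frm) : Tm (A.and B) (B.and A)
  | dOrTo (A : Frm) : Tm (A.or Frm.bot) A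
  | dOrFrom (A : Frm) : Tm A (A.or Frm.bot)
  | sOrTo (A : Frm) : Tm (Frm.bot.or A) A
  | sOrFrom (A : Frm) : Tm A (Frm.bot.or A)
  | dAndTo (A : Frm) : Tm (A.and Frm.top) A
  | dAndFrom (A : Frm) : Tm A (A.and Frm.top)
  | sAndTo (A : Frm) : Tm (Frm.top.and A) A
  | sAndFrom (A : Frm) : Tm A (Frm.top.and A)
  | ck (A B C D : Frm) : Tm ((A.and B).or (C.and D)) ((A.or C).and (B.or D))
  | wAndTo : Tm (Frm.bot.and Frm.bot) Frm.bot
  | wAndFrom : Tm Frm.bot (Frm.bot.and Frm.bot)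
  | wOrTo : Tm (Frm.top.or Frm.top) Frm.top
  | wOrFrom : Tm Frm.top (Frm.top.or Frm.top)
  | kappa : Tm Frm.bot Frm.top

/-- The equality of arrows of the free SMI category 𝓜 : the smallest
congruence (with respect to ∘, ∨, ∧) containing the equations of the two
symmetric monoidal structures, the naturality and isomorphism conditions,
and the thirteen coherence diagrams (1)-(13) of an SMI category. -/
inductive MEq : ∀ {A B : Frm}, Tm A B → Tm A B → Prop
  -- equivalence
  | refl {A B : Frm} (f : Tm A B) : MEq f f
  | symm {A B : Frm} {f g : Tm A B} : MEq f g → MEq g f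
  | trans {A B : Frm} {f g h : Tm A B} : MEq f g → MEq g h → MEq f h
  -- congruence
  | comp_congr {A B C : Frm} {g g' : Tm B C} {f f' : Tm A B} :
      MEq g g' → MEq f f' → MEq (g.comp f) (g'.comp f')
  | or_congr {A B C D : Frm} {f f' : Tm A B} {g g' : Tm C D} :
      MEq f f' → MEq g g' → MEq (f.orM g) (f'.orM g')
  | and_congr {A B C D : Frm} {f f' : Tm A B} {g g' : Tm C D} :
      MEq f f' → MEq g g' → MEq (f.andM g) (f'.andM g')
  -- category
  | id_comp {A B : Frm} (f : Tm A B) : MEq ((Tm.id B).comp f) f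
  | comp_id {A B : Frm} (f : Tm A B) : MEq (f.comp (Tm.id A)) f
  | comp_assoc {A B C D : Frm} (h : Tm C D) (g : Tm B C) (f : Tm A B) :
      MEq ((h.comp g).comp f) (h.comp (g.comp f))
  -- ∨ and ∧ are biendofunctors
  | or_id (A B : Frm) : MEq ((Tm.id A).orM (Tm.id B)) (Tm.id (A.or B))
  | and_id (A B : Frm) : MEq ((Tm.id A).andM (Tm.id B)) (Tm.id (A.and B))
  | or_comp {A B C A' B' C' : Frm} (g : Tm B C) (f : Tm A B) (g' : Tm B' C') (f' : Tm A' B') :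
      MEq ((g.comp f).orM (g'.comp f')) ((g.orM g').comp (f.orM f'))
  | and_comp {A B C A' B' C' : Frm} (g : Tm B C) (f : Tm A B) (g' : Tm B' C') (f' : Tm A' B') :
      MEq ((g.comp f).andM (g'.comp f')) ((g.andM g').comp (f.andM f'))
  -- naturality
  | bOr_nat {A A' B B' C C' : Frm} (f : Tm A A') (g : Tm B B') (h : Tm C C') :
      MEq ((Tm.bOrTo A' B' C').comp (f.orM (g.orM h))) (((f.orM g).orM h).comp (Tm.bOrTo A B C))
  | bAnd_nat {A A' B B' C C' : Frm} (f : Tm A A') (g : Tm B B') (h : Tm C C') :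
      MEq ((Tm.bAndTo A' B' C').comp (f.andM (g.andM h))) (((f.andM g).andM h).comp (Tm.bAndTo A B C))
  | cOr_nat {A A' B B' : Frm} (f : Tm A A') (g : Tm B B') :
      MEq ((Tm.cOr A' B').comp (f.orM g)) ((g.orM f).comp (Tm.cOr A B))
  | cAnd_nat {A A' B B' : Frm} (f : Tm A A') (g : Tm B B') :
      MEq ((Tm.cAnd A' B').comp (f.andM g)) ((g.andM f).comp (Tm.cAnd A B))
  | dOr_nat {A A' : Frm} (f : Tm A A') :
      MEq ((Tm.dOrTo A').comp (f.orM (Tm.id Frm.bot))) (f.comp (Tm.dOrTo A))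
  | sOr_nat {A A' : Frm} (f : Tm A A') :
      MEq ((Tm.sOrTo A').comp ((Tm.id Frm.bot).orM f)) (f.comp (Tm.sOrTo A))
  | dAnd_nat {A A' : Frm} (f : Tm A A') :
      MEq ((Tm.dAndTo A').comp (f.andM (Tm.id Frm.top))) (f.comp (Tm.dAndTo A))
  | sAnd_nat {A A' : Frm} (f : Tm A A') :
      MEq ((Tm.sAndTo A').comp ((Tm.id Frm.top).andM f)) (f.comp (Tm.sAndTo A))
  | ck_nat {A A' B B' C C' D D' : Frm}
      (f : Tm A A') (g : Tm B B') (h : Tm C C') (k : Tm D D') :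
      MEq ((Tm.ck A' B' C' D').comp ((f.andM g).orM (h.andM k)))
          (((f.orM h).andM (g.orM k)).comp (Tm.ck A B C D))
  -- the primitive arrows other than cᵏ and κ are isomorphisms
  | bOr_iso1 (A B C : Frm) : MEq ((Tm.bOrTo A B C).comp (Tm.bOrFrom A B C)) (Tm.id _)
  | bOr_iso2 (A B C : Frm) : MEq ((Tm.bOrFrom A B C).comp (Tm.bOrTo A B C)) (Tm.id _)
  | bAnd_iso1 (A B C : Frm) : MEq ((Tm.bAndTo A B C).comp (Tm.bAndFrom A B C)) (Tm.id _)
  | bAnd_iso2 (A B C : Frm) : MEq ((Tm.bAndFrom A B C).comp (Tm.bAndTo A B C)) (Tm.id _)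
  | dOr_iso1 (A : Frm) : MEq ((Tm.dOrTo A).comp (Tm.dOrFrom A)) (Tm.id _)
  | dOr_iso2 (A : Frm) : MEq ((Tm.dOrFrom A).comp (Tm.dOrTo A)) (Tm.id _)
  | sOr_iso1 (A : Frm) : MEq ((Tm.sOrTo A).comp (Tm.sOrFrom A)) (Tm.id _)
  | sOr_iso2 (A : Frm) : MEq ((Tm.sOrFrom A).comp (Tm.sOrTo A)) (Tm.id _)
  | dAnd_iso1 (A : Frm) : MEq ((Tm.dAndTo A).comp (Tm.dAndFrom A)) (Tm.id _)
  | dAnd_iso2 (A : Frm) : MEq ((Tm.dAndFrom A).comp (Tm.dAndTo A)) (Tm.id _)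
  | sAnd_iso1 (A : Frm) : MEq ((Tm.sAndTo A).comp (Tm.sAndFrom A)) (Tm.id _)
  | sAnd_iso2 (A : Frm) : MEq ((Tm.sAndFrom A).comp (Tm.sAndTo A)) (Tm.id _)
  | wOr_iso1 : MEq (Tm.wOrTo.comp Tm.wOrFrom) (Tm.id _)
  | wOr_iso2 : MEq (Tm.wOrFrom.comp Tm.wOrTo) (Tm.id _)
  | wAnd_iso1 : MEq (Tm.wAndTo.comp Tm.wAndFrom) (Tm.id _)
  | wAnd_iso2 : MEq (Tm.wAndFrom.comp Tm.wAndTo) (Tm.id _)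
  | cOr_inv (A B : Frm) : MEq ((Tm.cOr B A).comp (Tm.cOr A B)) (Tm.id _)
  | cAnd_inv (A B : Frm) : MEq ((Tm.cAnd B A).comp (Tm.cAnd A B)) (Tm.id _)
  -- Mac Lane coherence for the two symmetric monoidal structures
  | pentagonOr (A B C D : Frm) :
      MEq ((Tm.bOrTo (A.or B) C D).comp (Tm.bOrTo A B (C.or D)))
          (((Tm.bOrTo A B C).orM (Tm.id D)).comp
            ((Tm.bOrTo A (B.or C) D).comp ((Tm.id A).orM (Tm.bOrTo B C D))))
  | pentagonAnd (A B C D : Frm) :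
      MEq ((Tm.bAndTo (A.and B) C D).comp (Tm.bAndTo A B (C.and D)))
          (((Tm.bAndTo A B C).andM (Tm.id D)).comp
            ((Tm.bAndTo A (B.and C) D).comp ((Tm.id A).andM (Tm.bAndTo B C D))))
  | triangleOr (A B : Frm) :
      MEq (((Tm.dOrTo A).orM (Tm.id B)).comp (Tm.bOrTo A Frm.bot B))
          ((Tm.id A).orM (Tm.sOrTo B))
  | triangleAnd (A B : Frm) :
      MEq (((Tm.dAndTo A).andM (Tm.id B)).comp (Tm.bAndTo A Frm.top B))
          ((Tm.id A).andM (Tm.sAndTo B))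
  | hexagonOr (A B C : Frm) :
      MEq ((Tm.bOrTo C A B).comp ((Tm.cOr (A.or B) C).comp (Tm.bOrTo A B C)))
          (((Tm.cOr A C).orM (Tm.id B)).comp
            ((Tm.bOrTo A C B).comp ((Tm.id A).orM (Tm.cOr B C))))
  | hexagonAnd (A B C : Frm) :
      MEq ((Tm.bAndTo C A B).comp ((Tm.cAnd (A.and B) C).comp (Tm.bAndTo A B C)))
          (((Tm.cAnd A C).andM (Tm.id B)).comp
            ((Tm.bAndTo A C B).comp ((Tm.id A).andM (Tm.cAnd B C))))
  | sigmaOr_c (A : Frm) : MEq (Tm.sOrTo A) ((Tm.dOrTo A).comp (Tm.cOr Frm.bot A))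
  | sigmaAnd_c (A : Frm) : MEq (Tm.sAndTo A) ((Tm.dAndTo A).comp (Tm.cAnd Frm.top A))
  -- the thirteen SMI diagrams
  | diag1 (A B C D E F : Frm) :
      MEq ((Tm.bAndTo (A.or D) (B.or E) (C.or F)).comp
            (((Tm.id (A.or D)).andM (Tm.ck B C E F)).comp (Tm.ck A (B.and C) D (E.and F))))
          (((Tm.ck A B D E).andM (Tm.id (C.or F))).comp
            ((Tm.ck (A.and B) C (D.and E) F).comp ((Tm.bAndTo A B C).orM (Tm.bAndTo D E F))))
  | diag2 (A B C D E F : Frm) :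
      MEq (((Tm.bOrTo A B C).andM (Tm.bOrTo D E F)).comp
            ((Tm.ck A D (B.or C) (E.or F)).comp ((Tm.id (A.and D)).orM (Tm.ck B E C F))))
          ((Tm.ck (A.or B) (D.or E) C F).comp
            (((Tm.ck A D B E).orM (Tm.id (C.and F))).comp
              (Tm.bOrTo (A.and D) (B.and E) (C.and F))))
  | diag3 (A B C D : Frm) :
      MEq ((Tm.cAnd (A.or C) (B.or D)).comp (Tm.ck A B C D))
          ((Tm.ck B A D C).comp ((Tm.cAnd A B).orM (Tm.cAnd C D)))
  | diag4 (A B C D : Frm) :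
      MEq ((Tm.ck B D A C).comp (Tm.cOr (A.and C) (B.and D)))
          (((Tm.cOr A B).andM (Tm.cOr C D)).comp (Tm.ck A C B D))
  | diag5 (A B : Frm) :
      MEq (Tm.ck A B Frm.bot Frm.bot)
          (((Tm.dOrFrom A).andM (Tm.dOrFrom B)).comp
            ((Tm.dOrTo (A.and B)).comp ((Tm.id (A.and B)).orM Tm.wAndTo)))
  | diag6 (A B : Frm) :
      MEq (Tm.ck A Frm.top B Frm.top)
          (((Tm.id (A.or B)).andM Tm.wOrFrom).comp
            ((Tm.dAndFrom (A.or B)).comp ((Tm.dAndTo A).orM (Tm.dAndTo B))))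
  | diag7 :
      MEq (Tm.bOrTo Frm.top Frm.top Frm.top)
          ((Tm.wOrFrom.orM (Tm.id Frm.top)).comp ((Tm.id Frm.top).orM Tm.wOrTo))
  | diag8 :
      MEq (Tm.bAndTo Frm.bot Frm.bot Frm.bot)
          ((Tm.wAndFrom.andM (Tm.id Frm.bot)).comp ((Tm.id Frm.bot).andM Tm.wAndTo))
  | diag9 :
      MEq ((Tm.id Frm.top).orM Tm.kappa) (Tm.wOrFrom.comp (Tm.dOrTo Frm.top))
  | diag10 :
      MEq ((Tm.id Frm.bot).andM Tm.kappa) ((Tm.dAndFrom Frm.bot).comp Tm.wAndTo)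
  | diag11 :
      MEq (Tm.ck Frm.top Frm.bot Frm.bot Frm.top)
          (((Tm.dOrFrom Frm.top).andM (Tm.sOrFrom Frm.top)).comp
            ((Tm.dAndFrom Frm.top).comp
              (Tm.kappa.comp
                ((Tm.dOrTo Frm.bot).comp ((Tm.sAndTo Frm.bot).orM (Tm.dAndTo Frm.bot))))))
  | diag12 : MEq (Tm.cOr Frm.top Frm.top) (Tm.wOrFrom.comp Tm.wOrTo)
  | diag13 : MEq (Tm.cAnd Frm.bot Frm.bot) (Tm.wAndFrom.comp Tm.wAndTo)

end SMI

namespace SMI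

/-- The primitive arrow terms : b, c, δ, σ, cᵏ, w and κ. -/
inductive IsGen : ∀ {A B : Frm}, Tm A B → Prop
  | bOrTo (A B C : Frm) : IsGen (Tm.bOrTo A B C)
  | bOrFrom (A B C : Frm) : IsGen (Tm.bOrFrom A B C)
  | bAndTo (A B C : Frm) : IsGen (Tm.bAndTo A B C)
  | bAndFrom (A B C : Frm) : IsGen (Tm.bAndFrom A B C)
  | cOr (A B : Frm) : IsGen (Tm.cOr A B)
  | cAnd (A B : Frm) : IsGen (Tm.cAnd A B)
  | dOrTo (A : Frm) : IsGen (Tm.dOrTo A)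
  | dOrFrom (A : Frm) : IsGen (Tm.dOrFrom A)
  | sOrTo (A : Frm) : IsGen (Tm.sOrTo A)
  | sOrFrom (A : Frm) : IsGen (Tm.sOrFrom A)
  | dAndTo (A : Frm) : IsGen (Tm.dAndTo A)
  | dAndFrom (A : Frm) : IsGen (Tm.dAndFrom A)
  | sAndTo (A : Frm) : IsGen (Tm.sAndTo A)
  | sAndFrom (A : Frm) : IsGen (Tm.sAndFrom A)
  | ck (A B C D : Frm) : IsGen (Tm.ck A B C D)
  | wAndTo : IsGen Tm.wAndTo
  | wAndFrom : IsGen Tm.wAndFrom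
  | wOrTo : IsGen Tm.wOrTo
  | wOrFrom : IsGen Tm.wOrFrom
  | kappa : IsGen Tm.kappa

/-- A b-, c-, δ-, σ-, cᵏ-, w- or κ-term : a composition-free arrow term
built from identities and exactly one occurrence of a primitive arrow term
with the help of ∨ and ∧. -/
inductive OneHead : ∀ {A B : Frm}, Tm A B → Prop
  | base {A B : Frm} {f : Tm A B} : IsGen f → OneHead f
  | orl {A B : Frm} {f : Tm A B} (C : Frm) : OneHead f → OneHead (f.orM (Tm.id C))
  | orr {A B : Frm} {f : Tm A B} (C : Frm) : OneHead f → OneHead ((Tm.id C).orM f)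
  | andl {A B : Frm} {f : Tm A B} (C : Frm) : OneHead f → OneHead (f.andM (Tm.id C))
  | andr {A B : Frm} {f : Tm A B} (C : Frm) : OneHead f → OneHead ((Tm.id C).andM f)

/-- A developed arrow term : `fₙ ∘ … ∘ f₁ ∘ 1_A` where each `fᵢ` is a
b-, c-, δ-, σ-, cᵏ-, w- or κ-term. -/
inductive Developed : ∀ {A B : Frm}, Tm A B → Prop
  | base (A : Frm) : Developed (Tm.id A)
  | step {A B C : Frm} {g : Tm A B} {f : Tm B C} :
      Developed g → OneHead f → Developed (f.comp g)

/-- Composition of developed arrow terms is equal to a developed arrow term. -/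
lemma dev_comp {A B C : Frm} {f : Tm B C} {g : Tm A B}
    (hf : Developed f) (hg : Developed g) :
    ∃ h : Tm A C, Developed h ∧ MEq (f.comp g) h := by
  induction hf with
  | base => exact ⟨g, hg, MEq.id_comp g⟩
  | @step _ _ g' f' hd ho ih =>
      obtain ⟨h, hhd, hhe⟩ := ih
      exact ⟨f'.comp h, Developed.step hhd ho,
        MEq.trans (MEq.comp_assoc f' g' g) (MEq.comp_congr (MEq.refl f') hhe)⟩

lemma dev_orl {A B : Frm} {f : Tm A B} (C : Frm) (hf : Developed f) :
    ∃ h : Tm (A.or C) (B.or C), Developed h ∧ MEq (f.orM (Tm.id C)) h := by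
  induction hf with
  | base => exact ⟨Tm.id _, Developed.base _, MEq.or_id A C⟩
  | @step _ _ g' f' hd ho ih =>
      obtain ⟨h, hhd, hhe⟩ := ih
      refine ⟨(f'.orM (Tm.id C)).comp h, Developed.step hhd (OneHead.orl C ho), ?_⟩
      refine MEq.trans (MEq.or_congr (MEq.refl _) (MEq.symm (MEq.id_comp (Tm.id C)))) ?_
      exact MEq.trans (MEq.or_comp f' g' (Tm.id C) (Tm.id C))
        (MEq.comp_congr (MEq.refl _) hhe)

lemma dev_orr {A B : Frm} {f : Tm A B} (C : Frm) (hf : Developed f) :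
    ∃ h : Tm (C.or A) (C.or B), Developed h ∧ MEq ((Tm.id C).orM f) h := by
  induction hf with
  | base => exact ⟨Tm.id _, Developed.base _, MEq.or_id C A⟩
  | @step _ _ g' f' hd ho ih =>
      obtain ⟨h, hhd, hhe⟩ := ih
      refine ⟨((Tm.id C).orM f').comp h, Developed.step hhd (OneHead.orr C ho), ?_⟩
      refine MEq.trans (MEq.or_congr (MEq.symm (MEq.id_comp (Tm.id C))) (MEq.refl _)) ?_
      exact MEq.trans (MEq.or_comp (Tm.id C) (Tm.id C) f' g')
        (MEq.comp_congr (MEq.refl _) hhe)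

lemma dev_andl {A B : Frm} {f : Tm A B} (C : Frm) (hf : Developed f) :
    ∃ h : Tm (A.and C) (B.and C), Developed h ∧ MEq (f.andM (Tm.id C)) h := by
  induction hf with
  | base => exact ⟨Tm.id _, Developed.base _, MEq.and_id A C⟩
  | @step _ _ g' f' hd ho ih =>
      obtain ⟨h, hhd, hhe⟩ := ih
      refine ⟨(f'.andM (Tm.id C)).comp h, Developed.step hhd (OneHead.andl C ho), ?_⟩
      refine MEq.trans (MEq.and_congr (MEq.refl _) (MEq.symm (MEq.id_comp (Tm.id C)))) ?_
      exact MEq.trans (MEq.and_comp f' g' (Tm.id C) (Tm.id C))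
        (MEq.comp_congr (MEq.refl _) hhe)

lemma dev_andr {A B : Frm} {f : Tm A B} (C : Frm) (hf : Developed f) :
    ∃ h : Tm (C.and A) (C.and B), Developed h ∧ MEq ((Tm.id C).andM f) h := by
  induction hf with
  | base => exact ⟨Tm.id _, Developed.base _, MEq.and_id C A⟩
  | @step _ _ g' f' hd ho ih =>
      obtain ⟨h, hhd, hhe⟩ := ih
      refine ⟨((Tm.id C).andM f').comp h, Developed.step hhd (OneHead.andr C ho), ?_⟩
      refine MEq.trans (MEq.and_congr (MEq.symm (MEq.id_comp (Tm.id C))) (MEq.refl _)) ?_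
      exact MEq.trans (MEq.and_comp (Tm.id C) (Tm.id C) f' g')
        (MEq.comp_congr (MEq.refl _) hhe)

lemma dev_or {A B C D : Frm} {f : Tm A B} {g : Tm C D}
    (hf : Developed f) (hg : Developed g) :
    ∃ h : Tm (A.or C) (B.or D), Developed h ∧ MEq (f.orM g) h := by
  obtain ⟨h1, h1d, h1e⟩ := dev_orl D hf
  obtain ⟨h2, h2d, h2e⟩ := dev_orr A hg
  obtain ⟨h, hd, he⟩ := dev_comp h1d h2d
  refine ⟨h, hd, ?_⟩
  have e1 : MEq (f.orM g) ((f.comp (Tm.id A)).orM ((Tm.id D).comp g)) :=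
    MEq.or_congr (MEq.symm (MEq.comp_id f)) (MEq.symm (MEq.id_comp g))
  have e2 := MEq.or_comp f (Tm.id A) (Tm.id D) g
  refine MEq.trans e1 (MEq.trans e2 ?_)
  exact MEq.trans (MEq.comp_congr h1e h2e) he

lemma dev_and {A B C D : Frm} {f : Tm A B} {g : Tm C D}
    (hf : Developed f) (hg : Developed g) :
    ∃ h : Tm (A.and C) (B.and D), Developed h ∧ MEq (f.andM g) h := by
  obtain ⟨h1, h1d, h1e⟩ := dev_andl D hf
  obtain ⟨h2, h2d, h2e⟩ := dev_andr A hg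
  obtain ⟨h, hd, he⟩ := dev_comp h1d h2d
  refine ⟨h, hd, ?_⟩
  have e1 : MEq (f.andM g) ((f.comp (Tm.id A)).andM ((Tm.id D).comp g)) :=
    MEq.and_congr (MEq.symm (MEq.comp_id f)) (MEq.symm (MEq.id_comp g))
  have e2 := MEq.and_comp f (Tm.id A) (Tm.id D) g
  refine MEq.trans e1 (MEq.trans e2 ?_)
  exact MEq.trans (MEq.comp_congr h1e h2e) he

/-- In the free SMI category 𝓜 , every arrow term is equal to a developed
arrow term. -/
theorem every_arrow_term_is_developed {A B : Frm} (f : Tm A B) :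
    ∃ g : Tm A B, Developed g ∧ MEq f g := by
  induction f with
  | id A => exact ⟨Tm.id A, Developed.base A, MEq.refl _⟩
  | comp f g ihf ihg =>
      obtain ⟨f', f'd, f'e⟩ := ihf
      obtain ⟨g', g'd, g'e⟩ := ihg
      obtain ⟨h, hd, he⟩ := dev_comp f'd g'd
      exact ⟨h, hd, MEq.trans (MEq.comp_congr f'e g'e) he⟩
  | orM f g ihf ihg =>
      obtain ⟨f', f'd, f'e⟩ := ihf
      obtain ⟨g', g'd, g'e⟩ := ihg
      obtain ⟨h, hd, he⟩ := dev_or f'd g'd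
      exact ⟨h, hd, MEq.trans (MEq.or_congr f'e g'e) he⟩
  | andM f g ihf ihg =>
      obtain ⟨f', f'd, f'e⟩ := ihf
      obtain ⟨g', g'd, g'e⟩ := ihg
      obtain ⟨h, hd, he⟩ := dev_and f'd g'd
      exact ⟨h, hd, MEq.trans (MEq.and_congr f'e g'e) he⟩
  | _ =>
      exact ⟨_, Developed.step (Developed.base _) (OneHead.base (by constructor)),
        MEq.symm (MEq.comp_id _)⟩

end SMI
end

section
/- In the free SMI category M, if no propositional letter occurs in the objects A and B, then any arrow term f : A → B defined using only the unit isomorphisms δ, σ, the w-arrows and κ is either equal to an N-term (defined using only δ, σ, w) or equal to a composite h'' ∘ κ ∘ h' with h', h'' N-terms; consequently any two arrows f, g : A → B defined using only δ, σ, w, κ are equal. -/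
namespace SMI

/-- No propositional letter occurs in the formula. -/
def NoLtr : Frm → Prop
  | Frm.pl _ => False
  | Frm.bot => True
  | Frm.top => True
  | Frm.or A B => NoLtr A ∧ NoLtr B
  | Frm.and A B => NoLtr A ∧ NoLtr B

/-- The primitive δ-, σ- and w-arrows. -/
inductive IsNGen : ∀ {A B : Frm}, Tm A B → Prop
  | dOrTo (A : Frm) : IsNGen (Tm.dOrTo A)
  | dOrFrom (A : Frm) : IsNGen (Tm.dOrFrom A)
  | sOrTo (A : Frm) : IsNGen (Tm.sOrTo A)
  | sOrFrom (A : Frm) : IsNGen (Tm.sOrFrom A)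
  | dAndTo (A : Frm) : IsNGen (Tm.dAndTo A)
  | dAndFrom (A : Frm) : IsNGen (Tm.dAndFrom A)
  | sAndTo (A : Frm) : IsNGen (Tm.sAndTo A)
  | sAndFrom (A : Frm) : IsNGen (Tm.sAndFrom A)
  | wAndTo : IsNGen Tm.wAndTo
  | wAndFrom : IsNGen Tm.wAndFrom
  | wOrTo : IsNGen Tm.wOrTo
  | wOrFrom : IsNGen Tm.wOrFrom

/-- N_{⊤,⊥}-terms : arrow terms defined by δ, σ and w (and identities),
using composition, ∨ and ∧. -/
inductive NTm : ∀ {A B : Frm}, Tm A B → Prop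
  | id (A : Frm) : NTm (Tm.id A)
  | gen {A B : Frm} {f : Tm A B} : IsNGen f → NTm f
  | comp {A B C : Frm} {g : Tm B C} {f : Tm A B} : NTm g → NTm f → NTm (g.comp f)
  | orM {A B C D : Frm} {f : Tm A B} {g : Tm C D} : NTm f → NTm g → NTm (f.orM g)
  | andM {A B C D : Frm} {f : Tm A B} {g : Tm C D} : NTm f → NTm g → NTm (f.andM g)

/-- Arrow terms defined by δ, σ, w and κ. -/
inductive DSWK : ∀ {A B : Frm}, Tm A B → Prop
  | id (A : Frm) : DSWK (Tm.id A)
  | gen {A B : Frm} {f : Tm A B} : IsNGen f → DSWK f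
  | kappa : DSWK Tm.kappa
  | comp {A B C : Frm} {g : Tm B C} {f : Tm A B} : DSWK g → DSWK f → DSWK (g.comp f)
  | orM {A B C D : Frm} {f : Tm A B} {g : Tm C D} : DSWK f → DSWK g → DSWK (f.orM g)
  | andM {A B C D : Frm} {f : Tm A B} {g : Tm C D} : DSWK f → DSWK g → DSWK (f.andM g)

end SMI

namespace SMI

/-! ### Quotient category infrastructure -/

instance tmSetoid (A B : Frm) : Setoid (Tm A B) :=
  ⟨MEq, ⟨MEq.refl, MEq.symm, MEq.trans⟩⟩

def Q (A B : Frm) : Type := Quotient (tmSetoid A B)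

def q {A B : Frm} (f : Tm A B) : Q A B := Quotient.mk _ f

def qid (A : Frm) : Q A A := q (Tm.id A)

def Q.comp {A B C : Frm} : Q B C → Q A B → Q A C :=
  Quotient.lift₂ (fun g f => q (g.comp f))
    (fun _ _ _ _ hg hf => Quotient.sound (MEq.comp_congr hg hf))

scoped infixr:80 " ⊚ " => Q.comp

def Q.orQ {A B C D : Frm} : Q A B → Q C D → Q (A.or C) (B.or D) :=
  Quotient.lift₂ (fun f g => q (f.orM g))
    (fun _ _ _ _ hf hg => Quotient.sound (MEq.or_congr hf hg))

def Q.andQ {A B C D : Frm} : Q A B → Q C D → Q (A.and C) (B.and D) :=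
  Quotient.lift₂ (fun f g => q (f.andM g))
    (fun _ _ _ _ hf hg => Quotient.sound (MEq.and_congr hf hg))

lemma q_comp {A B C : Frm} (g : Tm B C) (f : Tm A B) :
    q (g.comp f) = q g ⊚ q f := rfl

lemma q_or {A B C D : Frm} (f : Tm A B) (g : Tm C D) :
    q (f.orM g) = Q.orQ (q f) (q g) := rfl

lemma q_and {A B C D : Frm} (f : Tm A B) (g : Tm C D) :
    q (f.andM g) = Q.andQ (q f) (q g) := rfl

lemma q_eq_iff {A B : Frm} {f g : Tm A B} : q f = q g ↔ MEq f g :=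
  ⟨fun h => Quotient.exact h, fun h => Quotient.sound h⟩

lemma qid_comp {A B : Frm} (x : Q A B) : qid B ⊚ x = x := by
  induction x using Quotient.ind
  exact Quotient.sound (MEq.id_comp _)

lemma qcomp_id {A B : Frm} (x : Q A B) : x ⊚ qid A = x := by
  induction x using Quotient.ind
  exact Quotient.sound (MEq.comp_id _)

lemma qassoc {A B C D : Frm} (h : Q C D) (g : Q B C) (f : Q A B) :
    (h ⊚ g) ⊚ f = h ⊚ (g ⊚ f) := by
  induction h using Quotient.ind
  induction g using Quotient.ind
  induction f using Quotient.ind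
  exact Quotient.sound (MEq.comp_assoc _ _ _)

lemma qor_id (A B : Frm) : Q.orQ (qid A) (qid B) = qid (A.or B) :=
  Quotient.sound (MEq.or_id A B)

lemma qand_id (A B : Frm) : Q.andQ (qid A) (qid B) = qid (A.and B) :=
  Quotient.sound (MEq.and_id A B)

lemma qor_comp {A B C A' B' C' : Frm} (g : Q B C) (f : Q A B)
    (g' : Q B' C') (f' : Q A' B') :
    Q.orQ (g ⊚ f) (g' ⊚ f') = Q.orQ g g' ⊚ Q.orQ f f' := by
  induction g using Quotient.ind
  induction f using Quotient.ind
  induction g' using Quotient.ind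
  induction f' using Quotient.ind
  exact Quotient.sound (MEq.or_comp _ _ _ _)

lemma qand_comp {A B C A' B' C' : Frm} (g : Q B C) (f : Q A B)
    (g' : Q B' C') (f' : Q A' B') :
    Q.andQ (g ⊚ f) (g' ⊚ f') = Q.andQ g g' ⊚ Q.andQ f f' := by
  induction g using Quotient.ind
  induction f using Quotient.ind
  induction g' using Quotient.ind
  induction f' using Quotient.ind
  exact Quotient.sound (MEq.and_comp _ _ _ _)

lemma cancel_left {A B X : Frm} {e : Q A B} {e' : Q B A}
    (he : e' ⊚ e = qid A) {f g : Q X A}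
    (h : e ⊚ f = e ⊚ g) : f = g := by
  have := congrArg (fun x => e' ⊚ x) h
  simpa [← qassoc, he, qid_comp] using this

lemma cancel_right {A B X : Frm} {e : Q A B} {e' : Q B A}
    (he : e ⊚ e' = qid B) {f g : Q B X}
    (h : f ⊚ e = g ⊚ e) : f = g := by
  have := congrArg (fun x => x ⊚ e') h
  simpa [qassoc, he, qcomp_id] using this

/-- Inverting a naturality square along two isos. -/
lemma square_inv {W X Y Z : Frm} {e : Q W Y} {e' : Q Y W} {u : Q X Z} {u' : Q Z X}
    {f : Q W X} {g : Q Y Z}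
    (h : g ⊚ e = u ⊚ f) (he : e ⊚ e' = qid Y) (hu : u' ⊚ u = qid X) :
    f ⊚ e' = u' ⊚ g := by
  have h2 : u' ⊚ ((g ⊚ e) ⊚ e') = u' ⊚ ((u ⊚ f) ⊚ e') := by rw [h]
  rw [qassoc, he, qcomp_id, qassoc, ← qassoc u' u (f ⊚ e'), hu, qid_comp] at h2
  exact h2.symm

/-! ### Lifted axioms -/

lemma qdOr_nat {A A' : Frm} (f : Tm A A') :
    q (Tm.dOrTo A') ⊚ Q.orQ (q f) (qid Frm.bot) = q f ⊚ q (Tm.dOrTo A) :=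
  Quotient.sound (MEq.dOr_nat f)

lemma qsOr_nat {A A' : Frm} (f : Tm A A') :
    q (Tm.sOrTo A') ⊚ Q.orQ (qid Frm.bot) (q f) = q f ⊚ q (Tm.sOrTo A) :=
  Quotient.sound (MEq.sOr_nat f)

lemma qdAnd_nat {A A' : Frm} (f : Tm A A') :
    q (Tm.dAndTo A') ⊚ Q.andQ (q f) (qid Frm.top) = q f ⊚ q (Tm.dAndTo A) :=
  Quotient.sound (MEq.dAnd_nat f)

lemma qsAnd_nat {A A' : Frm} (f : Tm A A') :
    q (Tm.sAndTo A') ⊚ Q.andQ (qid Frm.top) (q f) = q f ⊚ q (Tm.sAndTo A) :=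
  Quotient.sound (MEq.sAnd_nat f)

lemma qcOr_nat {A A' B B' : Frm} (f : Tm A A') (g : Tm B B') :
    q (Tm.cOr A' B') ⊚ Q.orQ (q f) (q g) = Q.orQ (q g) (q f) ⊚ q (Tm.cOr A B) :=
  Quotient.sound (MEq.cOr_nat f g)

lemma qcAnd_nat {A A' B B' : Frm} (f : Tm A A') (g : Tm B B') :
    q (Tm.cAnd A' B') ⊚ Q.andQ (q f) (q g) = Q.andQ (q g) (q f) ⊚ q (Tm.cAnd A B) :=
  Quotient.sound (MEq.cAnd_nat f g)

lemma qdOr_iso1 (A : Frm) : q (Tm.dOrTo A) ⊚ q (Tm.dOrFrom A) = qid A :=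
  Quotient.sound (MEq.dOr_iso1 A)
lemma qdOr_iso2 (A : Frm) : q (Tm.dOrFrom A) ⊚ q (Tm.dOrTo A) = qid _ :=
  Quotient.sound (MEq.dOr_iso2 A)
lemma qsOr_iso1 (A : Frm) : q (Tm.sOrTo A) ⊚ q (Tm.sOrFrom A) = qid A :=
  Quotient.sound (MEq.sOr_iso1 A)
lemma qsOr_iso2 (A : Frm) : q (Tm.sOrFrom A) ⊚ q (Tm.sOrTo A) = qid _ :=
  Quotient.sound (MEq.sOr_iso2 A)
lemma qdAnd_iso1 (A : Frm) : q (Tm.dAndTo A) ⊚ q (Tm.dAndFrom A) = qid A :=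
  Quotient.sound (MEq.dAnd_iso1 A)
lemma qdAnd_iso2 (A : Frm) : q (Tm.dAndFrom A) ⊚ q (Tm.dAndTo A) = qid _ :=
  Quotient.sound (MEq.dAnd_iso2 A)
lemma qsAnd_iso1 (A : Frm) : q (Tm.sAndTo A) ⊚ q (Tm.sAndFrom A) = qid A :=
  Quotient.sound (MEq.sAnd_iso1 A)
lemma qsAnd_iso2 (A : Frm) : q (Tm.sAndFrom A) ⊚ q (Tm.sAndTo A) = qid _ :=
  Quotient.sound (MEq.sAnd_iso2 A)
lemma qwOr_iso1 : q Tm.wOrTo ⊚ q Tm.wOrFrom = qid Frm.top :=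
  Quotient.sound MEq.wOr_iso1
lemma qwOr_iso2 : q Tm.wOrFrom ⊚ q Tm.wOrTo = qid _ :=
  Quotient.sound MEq.wOr_iso2
lemma qwAnd_iso1 : q Tm.wAndTo ⊚ q Tm.wAndFrom = qid Frm.bot :=
  Quotient.sound MEq.wAnd_iso1
lemma qwAnd_iso2 : q Tm.wAndFrom ⊚ q Tm.wAndTo = qid _ :=
  Quotient.sound MEq.wAnd_iso2
lemma qcOr_inv (A B : Frm) : q (Tm.cOr B A) ⊚ q (Tm.cOr A B) = qid (A.or B) :=
  Quotient.sound (MEq.cOr_inv A B)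
lemma qcAnd_inv (A B : Frm) : q (Tm.cAnd B A) ⊚ q (Tm.cAnd A B) = qid (A.and B) :=
  Quotient.sound (MEq.cAnd_inv A B)

lemma qsigmaOr (A : Frm) :
    q (Tm.sOrTo A) = q (Tm.dOrTo A) ⊚ q (Tm.cOr Frm.bot A) :=
  Quotient.sound (MEq.sigmaOr_c A)
lemma qsigmaAnd (A : Frm) :
    q (Tm.sAndTo A) = q (Tm.dAndTo A) ⊚ q (Tm.cAnd Frm.top A) :=
  Quotient.sound (MEq.sigmaAnd_c A)

lemma qdiag9 : Q.orQ (qid Frm.top) (q Tm.kappa) = q Tm.wOrFrom ⊚ q (Tm.dOrTo Frm.top) :=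
  Quotient.sound MEq.diag9
lemma qdiag10 : Q.andQ (qid Frm.bot) (q Tm.kappa) = q (Tm.dAndFrom Frm.bot) ⊚ q Tm.wAndTo :=
  Quotient.sound MEq.diag10
lemma qdiag12 : q (Tm.cOr Frm.top Frm.top) = q Tm.wOrFrom ⊚ q Tm.wOrTo :=
  Quotient.sound MEq.diag12
lemma qdiag13 : q (Tm.cAnd Frm.bot Frm.bot) = q Tm.wAndFrom ⊚ q Tm.wAndTo :=
  Quotient.sound MEq.diag13

/-! ### Kelly's lemma `λ_I = ρ_I`, proven generically for a monoidal structure -/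

structure MonQ where
  unit : Frm
  ten : Frm → Frm → Frm
  tmap : ∀ {A B C D : Frm}, Q A B → Q C D → Q (ten A C) (ten B D)
  bTo : ∀ A B C : Frm, Q (ten A (ten B C)) (ten (ten A B) C)
  bFrom : ∀ A B C : Frm, Q (ten (ten A B) C) (ten A (ten B C))
  dTo : ∀ A : Frm, Q (ten A unit) A
  dFrom : ∀ A : Frm, Q A (ten A unit)
  sTo : ∀ A : Frm, Q (ten unit A) A
  sFrom : ∀ A : Frm, Q A (ten unit A)
  tmap_id : ∀ A B : Frm, tmap (qid A) (qid B) = qid (ten A B)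
  tmap_comp : ∀ {A B C A' B' C' : Frm} (g : Q B C) (f : Q A B) (g' : Q B' C') (f' : Q A' B'),
      tmap (g ⊚ f) (g' ⊚ f') = tmap g g' ⊚ tmap f f'
  b_nat : ∀ {A A' B B' C C' : Frm} (f : Q A A') (g : Q B B') (h : Q C C'),
      bTo A' B' C' ⊚ tmap f (tmap g h) = tmap (tmap f g) h ⊚ bTo A B C
  d_nat : ∀ {A A' : Frm} (f : Q A A'), dTo A' ⊚ tmap f (qid unit) = f ⊚ dTo A
  s_nat : ∀ {A A' : Frm} (f : Q A A'), sTo A' ⊚ tmap (qid unit) f = f ⊚ sTo A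
  b_iso1 : ∀ A B C : Frm, bTo A B C ⊚ bFrom A B C = qid _
  b_iso2 : ∀ A B C : Frm, bFrom A B C ⊚ bTo A B C = qid _
  d_iso1 : ∀ A : Frm, dTo A ⊚ dFrom A = qid A
  d_iso2 : ∀ A : Frm, dFrom A ⊚ dTo A = qid _
  s_iso1 : ∀ A : Frm, sTo A ⊚ sFrom A = qid A
  s_iso2 : ∀ A : Frm, sFrom A ⊚ sTo A = qid _
  pentagon : ∀ A B C D : Frm,
      bTo (ten A B) C D ⊚ bTo A B (ten C D) =
        tmap (bTo A B C) (qid D) ⊚ (bTo A (ten B C) D ⊚ tmap (qid A) (bTo B C D))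
  triangle : ∀ A B : Frm,
      tmap (dTo A) (qid B) ⊚ bTo A unit B = tmap (qid A) (sTo B)

namespace MonQ

variable (M : MonQ)

lemma tsplit_l {A B C : Frm} (x : Q B C) (y : Q A B) :
    M.tmap (qid M.unit) (x ⊚ y) = M.tmap (qid M.unit) x ⊚ M.tmap (qid M.unit) y := by
  rw [← M.tmap_comp, qcomp_id]

lemma tsplit_r {A B C D : Frm} (x : Q B C) (y : Q A B) :
    M.tmap (x ⊚ y) (qid D) = M.tmap x (qid D) ⊚ M.tmap y (qid D) := by
  rw [← M.tmap_comp, qcomp_id]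

lemma lem1 (B : Frm) : M.tmap (qid M.unit) (M.sTo B) = M.sTo (M.ten M.unit B) := by
  have h := M.s_nat (M.sTo B)
  exact cancel_left (M.s_iso2 B) h

lemma tcancel {A B : Frm} {f g : Q A B}
    (h : M.tmap (qid M.unit) f = M.tmap (qid M.unit) g) : f = g := by
  have h1 := M.s_nat f
  have h2 := M.s_nat g
  rw [h, h2] at h1
  exact (cancel_right (M.s_iso1 A) h1).symm

lemma lemW (A B : Frm) :
    M.tmap (M.sTo A) (qid B) ⊚ M.bTo M.unit A B = M.sTo (M.ten A B) := by
  set I := M.unit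
  apply M.tcancel
  rw [tsplit_l]
  -- RHS via triangle at (I, A⊗B)
  rw [← M.triangle I (M.ten A B)]
  -- it suffices after composing with bTo I A B on the left
  apply cancel_left (M.b_iso2 I A B)
  calc M.bTo I A B ⊚ (M.tmap (qid I) (M.tmap (M.sTo A) (qid B)) ⊚ M.tmap (qid I) (M.bTo I A B))
      = (M.bTo I A B ⊚ M.tmap (qid I) (M.tmap (M.sTo A) (qid B))) ⊚ M.tmap (qid I) (M.bTo I A B) := by
        rw [qassoc]
    _ = (M.tmap (M.tmap (qid I) (M.sTo A)) (qid B) ⊚ M.bTo I (M.ten I A) B) ⊚ M.tmap (qid I) (M.bTo I A B) := by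
        rw [M.b_nat (qid I) (M.sTo A) (qid B)]
    _ = (M.tmap (M.tmap (M.dTo I) (qid A) ⊚ M.bTo I I A) (qid B) ⊚ M.bTo I (M.ten I A) B) ⊚ M.tmap (qid I) (M.bTo I A B) := by
        rw [M.triangle I A]
    _ = ((M.tmap (M.tmap (M.dTo I) (qid A)) (qid B) ⊚ M.tmap (M.bTo I I A) (qid B)) ⊚ M.bTo I (M.ten I A) B) ⊚ M.tmap (qid I) (M.bTo I A B) := by
        rw [tsplit_r]
    _ = M.tmap (M.tmap (M.dTo I) (qid A)) (qid B) ⊚ (M.tmap (M.bTo I I A) (qid B) ⊚ (M.bTo I (M.ten I A) B ⊚ M.tmap (qid I) (M.bTo I A B))) := by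
        simp only [qassoc]
    _ = M.tmap (M.tmap (M.dTo I) (qid A)) (qid B) ⊚ (M.bTo (M.ten I I) A B ⊚ M.bTo I I (M.ten A B)) := by
        rw [← M.pentagon I I A B]
    _ = (M.tmap (M.tmap (M.dTo I) (qid A)) (qid B) ⊚ M.bTo (M.ten I I) A B) ⊚ M.bTo I I (M.ten A B) := by
        rw [qassoc]
    _ = (M.bTo I A B ⊚ M.tmap (M.dTo I) (M.tmap (qid A) (qid B))) ⊚ M.bTo I I (M.ten A B) := by
        rw [← M.b_nat (M.dTo I) (qid A) (qid B)]
    _ = (M.bTo I A B ⊚ M.tmap (M.dTo I) (qid (M.ten A B))) ⊚ M.bTo I I (M.ten A B) := by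
        rw [M.tmap_id]
    _ = M.bTo I A B ⊚ (M.tmap (M.dTo I) (qid (M.ten A B)) ⊚ M.bTo I I (M.ten A B)) := by
        rw [qassoc]

theorem kelly : M.dTo M.unit = M.sTo M.unit := by
  set I := M.unit
  have h1 : M.tmap (M.sTo I) (qid I) ⊚ M.bTo I I I = M.tmap (M.dTo I) (qid I) ⊚ M.bTo I I I := by
    rw [M.lemW I I, M.triangle I I, M.lem1 I]
  have h2 : M.tmap (M.sTo I) (qid I) = M.tmap (M.dTo I) (qid I) :=
    cancel_right (M.b_iso1 I I I) h1
  have h3 := M.d_nat (M.sTo I)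
  have h4 := M.d_nat (M.dTo I)
  rw [h2, h4] at h3
  exact cancel_right (M.d_iso1 (M.ten I I)) h3

end MonQ

def orMon : MonQ where
  unit := Frm.bot
  ten := Frm.or
  tmap := Q.orQ
  bTo A B C := q (Tm.bOrTo A B C)
  bFrom A B C := q (Tm.bOrFrom A B C)
  dTo A := q (Tm.dOrTo A)
  dFrom A := q (Tm.dOrFrom A)
  sTo A := q (Tm.sOrTo A)
  sFrom A := q (Tm.sOrFrom A)
  tmap_id := qor_id
  tmap_comp := fun g f g' f' => (qor_comp g f g' f').symm.symm
  b_nat := fun f g h => by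
    induction f using Quotient.ind
    induction g using Quotient.ind
    induction h using Quotient.ind
    exact Quotient.sound (MEq.bOr_nat _ _ _)
  d_nat := fun f => by
    induction f using Quotient.ind
    exact Quotient.sound (MEq.dOr_nat _)
  s_nat := fun f => by
    induction f using Quotient.ind
    exact Quotient.sound (MEq.sOr_nat _)
  b_iso1 A B C := Quotient.sound (MEq.bOr_iso1 A B C)
  b_iso2 A B C := Quotient.sound (MEq.bOr_iso2 A B C)
  d_iso1 A := Quotient.sound (MEq.dOr_iso1 A)
  d_iso2 A := Quotient.sound (MEq.dOr_iso2 A)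
  s_iso1 A := Quotient.sound (MEq.sOr_iso1 A)
  s_iso2 A := Quotient.sound (MEq.sOr_iso2 A)
  pentagon A B C D := Quotient.sound (MEq.pentagonOr A B C D)
  triangle A B := Quotient.sound (MEq.triangleOr A B)

def andMon : MonQ where
  unit := Frm.top
  ten := Frm.and
  tmap := Q.andQ
  bTo A B C := q (Tm.bAndTo A B C)
  bFrom A B C := q (Tm.bAndFrom A B C)
  dTo A := q (Tm.dAndTo A)
  dFrom A := q (Tm.dAndFrom A)
  sTo A := q (Tm.sAndTo A)
  sFrom A := q (Tm.sAndFrom A)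
  tmap_id := qand_id
  tmap_comp := fun g f g' f' => qand_comp g f g' f'
  b_nat := fun f g h => by
    induction f using Quotient.ind
    induction g using Quotient.ind
    induction h using Quotient.ind
    exact Quotient.sound (MEq.bAnd_nat _ _ _)
  d_nat := fun f => by
    induction f using Quotient.ind
    exact Quotient.sound (MEq.dAnd_nat _)
  s_nat := fun f => by
    induction f using Quotient.ind
    exact Quotient.sound (MEq.sAnd_nat _)
  b_iso1 A B C := Quotient.sound (MEq.bAnd_iso1 A B C)
  b_iso2 A B C := Quotient.sound (MEq.bAnd_iso2 A B C)
  d_iso1 A := Quotient.sound (MEq.dAnd_iso1 A)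
  d_iso2 A := Quotient.sound (MEq.dAnd_iso2 A)
  s_iso1 A := Quotient.sound (MEq.sAnd_iso1 A)
  s_iso2 A := Quotient.sound (MEq.sAnd_iso2 A)
  pentagon A B C D := Quotient.sound (MEq.pentagonAnd A B C D)
  triangle A B := Quotient.sound (MEq.triangleAnd A B)

/-- Kelly: `ρ_⊥ = λ_⊥` for ∨. -/
lemma kOr : q (Tm.dOrTo Frm.bot) = q (Tm.sOrTo Frm.bot) := orMon.kelly

/-- Kelly: `ρ_⊤ = λ_⊤` for ∧. -/
lemma kAnd : q (Tm.dAndTo Frm.top) = q (Tm.sAndTo Frm.top) := andMon.kelly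

lemma kOr' : q (Tm.dOrFrom Frm.bot) = q (Tm.sOrFrom Frm.bot) := by
  calc q (Tm.dOrFrom Frm.bot)
      = q (Tm.dOrFrom Frm.bot) ⊚ (q (Tm.sOrTo Frm.bot) ⊚ q (Tm.sOrFrom Frm.bot)) := by
        rw [qsOr_iso1, qcomp_id]
    _ = (q (Tm.dOrFrom Frm.bot) ⊚ q (Tm.dOrTo Frm.bot)) ⊚ q (Tm.sOrFrom Frm.bot) := by
        rw [kOr, qassoc]
    _ = q (Tm.sOrFrom Frm.bot) := by rw [qdOr_iso2, qid_comp]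

lemma kAnd' : q (Tm.dAndFrom Frm.top) = q (Tm.sAndFrom Frm.top) := by
  calc q (Tm.dAndFrom Frm.top)
      = q (Tm.dAndFrom Frm.top) ⊚ (q (Tm.sAndTo Frm.top) ⊚ q (Tm.sAndFrom Frm.top)) := by
        rw [qsAnd_iso1, qcomp_id]
    _ = (q (Tm.dAndFrom Frm.top) ⊚ q (Tm.dAndTo Frm.top)) ⊚ q (Tm.sAndFrom Frm.top) := by
        rw [kAnd, qassoc]
    _ = q (Tm.sAndFrom Frm.top) := by rw [qdAnd_iso2, qid_comp]

/-! ### Derived `From`-naturalities -/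

lemma qdOrFrom_nat {A A' : Frm} (f : Tm A A') :
    Q.orQ (q f) (qid Frm.bot) ⊚ q (Tm.dOrFrom A) = q (Tm.dOrFrom A') ⊚ q f :=
  square_inv (qdOr_nat f).symm (qdOr_iso1 A) (qdOr_iso2 A')

lemma qsOrFrom_nat {A A' : Frm} (f : Tm A A') :
    Q.orQ (qid Frm.bot) (q f) ⊚ q (Tm.sOrFrom A) = q (Tm.sOrFrom A') ⊚ q f :=
  square_inv (qsOr_nat f).symm (qsOr_iso1 A) (qsOr_iso2 A')

lemma qdAndFrom_nat {A A' : Frm} (f : Tm A A') :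
    Q.andQ (q f) (qid Frm.top) ⊚ q (Tm.dAndFrom A) = q (Tm.dAndFrom A') ⊚ q f :=
  square_inv (qdAnd_nat f).symm (qdAnd_iso1 A) (qdAnd_iso2 A')

lemma qsAndFrom_nat {A A' : Frm} (f : Tm A A') :
    Q.andQ (qid Frm.top) (q f) ⊚ q (Tm.sAndFrom A) = q (Tm.sAndFrom A') ⊚ q f :=
  square_inv (qsAnd_nat f).symm (qsAnd_iso1 A) (qsAnd_iso2 A')

/-! ### Evaluation of letterless formulas and normal forms -/

/-- The unit corresponding to a truth value. -/
def tv : Bool → Frm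
  | false => Frm.bot
  | true => Frm.top

/-- Evaluation of a (letterless) formula. -/
def val : Frm → Bool
  | Frm.pl _ => false
  | Frm.bot => false
  | Frm.top => true
  | Frm.or A B => val A || val B
  | Frm.and A B => val A && val B

/-- The canonical arrow between units, when it exists. -/
def lnk : (a b : Bool) → (a = true → b = true) → Tm (tv a) (tv b)
  | false, false, _ => Tm.id Frm.bot
  | false, true, _ => Tm.kappa
  | true, true, _ => Tm.id Frm.top
  | true, false, h => nomatch h rfl

def qlnk (a b : Bool) (m : a = true → b = true) : Q (tv a) (tv b) := q (lnk a b m)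

def orStep : (a b : Bool) → Tm ((tv a).or (tv b)) (tv (a || b))
  | false, false => Tm.dOrTo Frm.bot
  | false, true => Tm.sOrTo Frm.top
  | true, false => Tm.dOrTo Frm.top
  | true, true => Tm.wOrTo

def orStepInv : (a b : Bool) → Tm (tv (a || b)) ((tv a).or (tv b))
  | false, false => Tm.dOrFrom Frm.bot
  | false, true => Tm.sOrFrom Frm.top
  | true, false => Tm.dOrFrom Frm.top
  | true, true => Tm.wOrFrom

def andStep : (a b : Bool) → Tm ((tv a).and (tv b)) (tv (a && b))
  | false, false => Tm.wAndTo
  | false, true => Tm.dAndTo Frm.bot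
  | true, false => Tm.sAndTo Frm.bot
  | true, true => Tm.dAndTo Frm.top

def andStepInv : (a b : Bool) → Tm (tv (a && b)) ((tv a).and (tv b))
  | false, false => Tm.wAndFrom
  | false, true => Tm.dAndFrom Frm.bot
  | true, false => Tm.sAndFrom Frm.bot
  | true, true => Tm.dAndFrom Frm.top

/-- The normalizing N-term of a letterless formula. -/
def nrm : (C : Frm) → NoLtr C → Tm C (tv (val C))
  | Frm.pl _, h => False.elim h
  | Frm.bot, _ => Tm.id Frm.bot
  | Frm.top, _ => Tm.id Frm.top
  | Frm.or A B, h => (orStep (val A) (val B)).comp ((nrm A h.1).orM (nrm B h.2))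
  | Frm.and A B, h => (andStep (val A) (val B)).comp ((nrm A h.1).andM (nrm B h.2))

def nrmInv : (C : Frm) → NoLtr C → Tm (tv (val C)) C
  | Frm.pl _, h => False.elim h
  | Frm.bot, _ => Tm.id Frm.bot
  | Frm.top, _ => Tm.id Frm.top
  | Frm.or A B, h => ((nrmInv A h.1).orM (nrmInv B h.2)).comp (orStepInv (val A) (val B))
  | Frm.and A B, h => ((nrmInv A h.1).andM (nrmInv B h.2)).comp (andStepInv (val A) (val B))

lemma orStep_ntm (a b : Bool) : NTm (orStep a b) := by
  cases a <;> cases b <;> exact NTm.gen (by constructor)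

lemma orStepInv_ntm (a b : Bool) : NTm (orStepInv a b) := by
  cases a <;> cases b <;> exact NTm.gen (by constructor)

lemma andStep_ntm (a b : Bool) : NTm (andStep a b) := by
  cases a <;> cases b <;> exact NTm.gen (by constructor)

lemma andStepInv_ntm (a b : Bool) : NTm (andStepInv a b) := by
  cases a <;> cases b <;> exact NTm.gen (by constructor)

lemma nrm_ntm : ∀ (C : Frm) (h : NoLtr C), NTm (nrm C h)
  | Frm.pl _, h => False.elim h
  | Frm.bot, _ => NTm.id _
  | Frm.top, _ => NTm.id _
  | Frm.or A B, h => NTm.comp (orStep_ntm _ _) (NTm.orM (nrm_ntm A h.1) (nrm_ntm B h.2))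
  | Frm.and A B, h => NTm.comp (andStep_ntm _ _) (NTm.andM (nrm_ntm A h.1) (nrm_ntm B h.2))

lemma nrmInv_ntm : ∀ (C : Frm) (h : NoLtr C), NTm (nrmInv C h)
  | Frm.pl _, h => False.elim h
  | Frm.bot, _ => NTm.id _
  | Frm.top, _ => NTm.id _
  | Frm.or A B, h => NTm.comp (NTm.orM (nrmInv_ntm A h.1) (nrmInv_ntm B h.2)) (orStepInv_ntm _ _)
  | Frm.and A B, h => NTm.comp (NTm.andM (nrmInv_ntm A h.1) (nrmInv_ntm B h.2)) (andStepInv_ntm _ _)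

lemma qorStep_iso1 (a b : Bool) : q (orStep a b) ⊚ q (orStepInv a b) = qid (tv (a || b)) := by
  cases a <;> cases b
  · exact qdOr_iso1 _
  · exact qsOr_iso1 _
  · exact qdOr_iso1 _
  · exact qwOr_iso1

lemma qorStep_iso2 (a b : Bool) : q (orStepInv a b) ⊚ q (orStep a b) = qid ((tv a).or (tv b)) := by
  cases a <;> cases b
  · exact qdOr_iso2 _
  · exact qsOr_iso2 _
  · exact qdOr_iso2 _
  · exact qwOr_iso2

lemma qandStep_iso1 (a b : Bool) : q (andStep a b) ⊚ q (andStepInv a b) = qid (tv (a && b)) := by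
  cases a <;> cases b
  · exact qwAnd_iso1
  · exact qdAnd_iso1 _
  · exact qsAnd_iso1 _
  · exact qdAnd_iso1 _

lemma qandStep_iso2 (a b : Bool) : q (andStepInv a b) ⊚ q (andStep a b) = qid ((tv a).and (tv b)) := by
  cases a <;> cases b
  · exact qwAnd_iso2
  · exact qdAnd_iso2 _
  · exact qsAnd_iso2 _
  · exact qdAnd_iso2 _

lemma qnrm_iso1 : ∀ (C : Frm) (h h' : NoLtr C),
    q (nrm C h) ⊚ q (nrmInv C h') = qid (tv (val C))
  | Frm.pl _, h, _ => False.elim h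
  | Frm.bot, _, _ => qid_comp _
  | Frm.top, _, _ => qid_comp _
  | Frm.or A B, h, h' => by
    show (q (orStep (val A) (val B)) ⊚ Q.orQ (q (nrm A h.1)) (q (nrm B h.2))) ⊚
        (Q.orQ (q (nrmInv A h'.1)) (q (nrmInv B h'.2)) ⊚ q (orStepInv (val A) (val B))) = _
    rw [qassoc, ← qassoc (Q.orQ (q (nrm A h.1)) (q (nrm B h.2))), ← qor_comp,
      qnrm_iso1 A h.1 h'.1, qnrm_iso1 B h.2 h'.2, qor_id, qid_comp, qorStep_iso1]
    rfl
  | Frm.and A B, h, h' => by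
    show (q (andStep (val A) (val B)) ⊚ Q.andQ (q (nrm A h.1)) (q (nrm B h.2))) ⊚
        (Q.andQ (q (nrmInv A h'.1)) (q (nrmInv B h'.2)) ⊚ q (andStepInv (val A) (val B))) = _
    rw [qassoc, ← qassoc (Q.andQ (q (nrm A h.1)) (q (nrm B h.2))), ← qand_comp,
      qnrm_iso1 A h.1 h'.1, qnrm_iso1 B h.2 h'.2, qand_id, qid_comp, qandStep_iso1]
    rfl

lemma qnrm_iso2 : ∀ (C : Frm) (h h' : NoLtr C),
    q (nrmInv C h) ⊚ q (nrm C h') = qid C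
  | Frm.pl _, h, _ => False.elim h
  | Frm.bot, _, _ => qid_comp _
  | Frm.top, _, _ => qid_comp _
  | Frm.or A B, h, h' => by
    show (Q.orQ (q (nrmInv A h.1)) (q (nrmInv B h.2)) ⊚ q (orStepInv (val A) (val B))) ⊚
        (q (orStep (val A) (val B)) ⊚ Q.orQ (q (nrm A h'.1)) (q (nrm B h'.2))) = _
    rw [qassoc, ← qassoc (q (orStepInv (val A) (val B))), qorStep_iso2, qid_comp,
      ← qor_comp, qnrm_iso2 A h.1 h'.1, qnrm_iso2 B h.2 h'.2, qor_id]
  | Frm.and A B, h, h' => by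
    show (Q.andQ (q (nrmInv A h.1)) (q (nrmInv B h.2)) ⊚ q (andStepInv (val A) (val B))) ⊚
        (q (andStep (val A) (val B)) ⊚ Q.andQ (q (nrm A h'.1)) (q (nrm B h'.2))) = _
    rw [qassoc, ← qassoc (q (andStepInv (val A) (val B))), qandStep_iso2, qid_comp,
      ← qand_comp, qnrm_iso2 A h.1 h'.1, qnrm_iso2 B h.2 h'.2, qand_id]

/-! ### Compatibility of the canonical steps with the unit arrows -/

lemma qcompat_dOr (a : Bool) (m : (a || false) = true → a = true) :
    qlnk (a || false) a m ⊚ q (orStep a false) = q (Tm.dOrTo (tv a)) := by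
  cases a <;> exact qid_comp _

lemma qcompat_sOr (a : Bool) (m : (false || a) = true → a = true) :
    qlnk (false || a) a m ⊚ q (orStep false a) = q (Tm.sOrTo (tv a)) := by
  cases a
  · show qid Frm.bot ⊚ q (Tm.dOrTo Frm.bot) = q (Tm.sOrTo Frm.bot)
    rw [qid_comp, kOr]
  · exact qid_comp _

lemma qcompat_dAnd (a : Bool) (m : (a && true) = true → a = true) :
    qlnk (a && true) a m ⊚ q (andStep a true) = q (Tm.dAndTo (tv a)) := by
  cases a <;> exact qid_comp _

lemma qcompat_sAnd (a : Bool) (m : (true && a) = true → a = true) :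
    qlnk (true && a) a m ⊚ q (andStep true a) = q (Tm.sAndTo (tv a)) := by
  cases a
  · exact qid_comp _
  · show qid Frm.top ⊚ q (Tm.dAndTo Frm.top) = q (Tm.sAndTo Frm.top)
    rw [qid_comp, kAnd]

lemma qcompat_dOr' (a : Bool) (m : a = true → (a || false) = true) :
    q (orStepInv a false) ⊚ qlnk a (a || false) m = q (Tm.dOrFrom (tv a)) := by
  cases a <;> exact qcomp_id _

lemma qcompat_sOr' (a : Bool) (m : a = true → (false || a) = true) :
    q (orStepInv false a) ⊚ qlnk a (false || a) m = q (Tm.sOrFrom (tv a)) := by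
  cases a
  · show q (Tm.dOrFrom Frm.bot) ⊚ qid Frm.bot = q (Tm.sOrFrom Frm.bot)
    rw [qcomp_id, kOr']
  · exact qcomp_id _

lemma qcompat_dAnd' (a : Bool) (m : a = true → (a && true) = true) :
    q (andStepInv a true) ⊚ qlnk a (a && true) m = q (Tm.dAndFrom (tv a)) := by
  cases a <;> exact qcomp_id _

lemma qcompat_sAnd' (a : Bool) (m : a = true → (true && a) = true) :
    q (andStepInv true a) ⊚ qlnk a (true && a) m = q (Tm.sAndFrom (tv a)) := by
  cases a
  · exact qcomp_id _
  · show q (Tm.dAndFrom Frm.top) ⊚ qid Frm.top = q (Tm.sAndFrom Frm.top)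
    rw [qcomp_id, kAnd']

/-! ### Auxiliary equations -/

lemma wOr_kappa_r : q Tm.wOrTo ⊚ Q.orQ (qid Frm.top) (q Tm.kappa) = q (Tm.dOrTo Frm.top) := by
  rw [qdiag9, ← qassoc, qwOr_iso1, qid_comp]

lemma wAnd_kappa_r : q (Tm.dAndTo Frm.bot) ⊚ Q.andQ (qid Frm.bot) (q Tm.kappa) = q Tm.wAndTo := by
  rw [qdiag10, ← qassoc, qdAnd_iso1, qid_comp]

lemma qcOr_nat_inst :
    q (Tm.cOr Frm.top Frm.top) ⊚ Q.orQ (qid Frm.top) (q Tm.kappa) =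
      Q.orQ (q Tm.kappa) (qid Frm.top) ⊚ q (Tm.cOr Frm.top Frm.bot) :=
  qcOr_nat (Tm.id Frm.top) Tm.kappa

lemma qcAnd_nat_inst :
    q (Tm.cAnd Frm.top Frm.bot) ⊚ Q.andQ (q Tm.kappa) (qid Frm.bot) =
      Q.andQ (qid Frm.bot) (q Tm.kappa) ⊚ q (Tm.cAnd Frm.bot Frm.bot) :=
  qcAnd_nat Tm.kappa (Tm.id Frm.bot)

/-! ### The key commuting squares -/

lemma qorKey (a a' b b' : Bool) (m₁ : a = true → a' = true) (m₂ : b = true → b' = true)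
    (m : (a || b) = true → (a' || b') = true) :
    q (orStep a' b') ⊚ Q.orQ (qlnk a a' m₁) (qlnk b b' m₂) =
      qlnk (a || b) (a' || b') m ⊚ q (orStep a b) := by
  cases a <;> cases a' <;> cases b <;> cases b'
  -- (f,f,f,f)
  · show q (Tm.dOrTo Frm.bot) ⊚ Q.orQ (qid Frm.bot) (qid Frm.bot) =
      qid Frm.bot ⊚ q (Tm.dOrTo Frm.bot)
    rw [qor_id, qcomp_id, qid_comp]
  -- (f,f,f,t)  S1
  · show q (Tm.sOrTo Frm.top) ⊚ Q.orQ (qid Frm.bot) (q Tm.kappa) =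
      q Tm.kappa ⊚ q (Tm.dOrTo Frm.bot)
    rw [qsOr_nat Tm.kappa, ← kOr]
  -- (f,f,t,f) impossible
  · exact absurd (m₂ rfl) (by simp)
  -- (f,f,t,t)
  · show q (Tm.sOrTo Frm.top) ⊚ Q.orQ (qid Frm.bot) (qid Frm.top) =
      qid Frm.top ⊚ q (Tm.sOrTo Frm.top)
    rw [qor_id, qcomp_id, qid_comp]
  -- (f,t,f,f)  S2
  · show q (Tm.dOrTo Frm.top) ⊚ Q.orQ (q Tm.kappa) (qid Frm.bot) =
      q Tm.kappa ⊚ q (Tm.dOrTo Frm.bot)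
    exact qdOr_nat Tm.kappa
  -- (f,t,f,t)  S3
  · show q Tm.wOrTo ⊚ Q.orQ (q Tm.kappa) (q Tm.kappa) =
      q Tm.kappa ⊚ q (Tm.dOrTo Frm.bot)
    have e : Q.orQ (q Tm.kappa) (q Tm.kappa) =
        Q.orQ (qid Frm.top) (q Tm.kappa) ⊚ Q.orQ (q Tm.kappa) (qid Frm.bot) := by
      rw [← qor_comp, qid_comp, qcomp_id]
    rw [e, ← qassoc, wOr_kappa_r, qdOr_nat Tm.kappa]
  -- (f,t,t,f) impossible
  · exact absurd (m₂ rfl) (by simp)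
  -- (f,t,t,t)  S4
  · show q Tm.wOrTo ⊚ Q.orQ (q Tm.kappa) (qid Frm.top) =
      qid Frm.top ⊚ q (Tm.sOrTo Frm.top)
    have e : Q.orQ (q Tm.kappa) (qid Frm.top) =
        (q (Tm.cOr Frm.top Frm.top) ⊚ Q.orQ (qid Frm.top) (q Tm.kappa)) ⊚
          q (Tm.cOr Frm.bot Frm.top) := by
      rw [qcOr_nat_inst, qassoc, qcOr_inv, qcomp_id]
    rw [e, qid_comp, qsigmaOr]
    calc q Tm.wOrTo ⊚ (q (Tm.cOr Frm.top Frm.top) ⊚ Q.orQ (qid Frm.top) (q Tm.kappa)) ⊚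
          q (Tm.cOr Frm.bot Frm.top)
        = ((q Tm.wOrTo ⊚ q (Tm.cOr Frm.top Frm.top)) ⊚ Q.orQ (qid Frm.top) (q Tm.kappa)) ⊚
          q (Tm.cOr Frm.bot Frm.top) := by simp only [qassoc]
      _ = ((q Tm.wOrTo) ⊚ Q.orQ (qid Frm.top) (q Tm.kappa)) ⊚ q (Tm.cOr Frm.bot Frm.top) := by
          rw [qdiag12, ← qassoc (q Tm.wOrTo), qwOr_iso1, qid_comp]
      _ = q (Tm.dOrTo Frm.top) ⊚ q (Tm.cOr Frm.bot Frm.top) := by rw [wOr_kappa_r]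
  -- (t,f,*,*) impossible (4 cases)
  · exact absurd (m₁ rfl) (by simp)
  · exact absurd (m₁ rfl) (by simp)
  · exact absurd (m₁ rfl) (by simp)
  · exact absurd (m₁ rfl) (by simp)
  -- (t,t,f,f)
  · show q (Tm.dOrTo Frm.top) ⊚ Q.orQ (qid Frm.top) (qid Frm.bot) =
      qid Frm.top ⊚ q (Tm.dOrTo Frm.top)
    rw [qor_id, qcomp_id, qid_comp]
  -- (t,t,f,t)  S5
  · show q Tm.wOrTo ⊚ Q.orQ (qid Frm.top) (q Tm.kappa) =
      qid Frm.top ⊚ q (Tm.dOrTo Frm.top)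
    rw [wOr_kappa_r, qid_comp]
  -- (t,t,t,f) impossible
  · exact absurd (m₂ rfl) (by simp)
  -- (t,t,t,t)
  · show q Tm.wOrTo ⊚ Q.orQ (qid Frm.top) (qid Frm.top) = qid Frm.top ⊚ q Tm.wOrTo
    rw [qor_id, qcomp_id, qid_comp]

lemma qandKey (a a' b b' : Bool) (m₁ : a = true → a' = true) (m₂ : b = true → b' = true)
    (m : (a && b) = true → (a' && b') = true) :
    q (andStep a' b') ⊚ Q.andQ (qlnk a a' m₁) (qlnk b b' m₂) =
      qlnk (a && b) (a' && b') m ⊚ q (andStep a b) := by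
  cases a <;> cases a' <;> cases b <;> cases b'
  -- (f,f,f,f)
  · show q Tm.wAndTo ⊚ Q.andQ (qid Frm.bot) (qid Frm.bot) = qid Frm.bot ⊚ q Tm.wAndTo
    rw [qand_id, qcomp_id, qid_comp]
  -- (f,f,f,t)  TA
  · show q (Tm.dAndTo Frm.bot) ⊚ Q.andQ (qid Frm.bot) (q Tm.kappa) =
      qid Frm.bot ⊚ q Tm.wAndTo
    rw [wAnd_kappa_r, qid_comp]
  -- (f,f,t,f) impossible
  · exact absurd (m₂ rfl) (by simp)
  -- (f,f,t,t)
  · show q (Tm.dAndTo Frm.bot) ⊚ Q.andQ (qid Frm.bot) (qid Frm.top) =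
      qid Frm.bot ⊚ q (Tm.dAndTo Frm.bot)
    rw [qand_id, qcomp_id, qid_comp]
  -- (f,t,f,f)  TB
  · show q (Tm.sAndTo Frm.bot) ⊚ Q.andQ (q Tm.kappa) (qid Frm.bot) =
      qid Frm.bot ⊚ q Tm.wAndTo
    rw [qsigmaAnd, qid_comp]
    calc (q (Tm.dAndTo Frm.bot) ⊚ q (Tm.cAnd Frm.top Frm.bot)) ⊚
          Q.andQ (q Tm.kappa) (qid Frm.bot)
        = q (Tm.dAndTo Frm.bot) ⊚
            (Q.andQ (qid Frm.bot) (q Tm.kappa) ⊚ q (Tm.cAnd Frm.bot Frm.bot)) := by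
          rw [qassoc, qcAnd_nat_inst]
      _ = q Tm.wAndTo ⊚ q (Tm.cAnd Frm.bot Frm.bot) := by
          rw [← qassoc, wAnd_kappa_r]
      _ = q Tm.wAndTo := by
          rw [qdiag13, ← qassoc, qwAnd_iso1, qid_comp]
  -- (f,t,f,t)  TC
  · show q (Tm.dAndTo Frm.top) ⊚ Q.andQ (q Tm.kappa) (q Tm.kappa) =
      q Tm.kappa ⊚ q Tm.wAndTo
    have e : Q.andQ (q Tm.kappa) (q Tm.kappa) =
        Q.andQ (q Tm.kappa) (qid Frm.top) ⊚ Q.andQ (qid Frm.bot) (q Tm.kappa) := by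
      rw [← qand_comp, qid_comp, qcomp_id]
    rw [e, ← qassoc, qdAnd_nat Tm.kappa, qassoc, wAnd_kappa_r]
  -- (f,t,t,f) impossible
  · exact absurd (m₂ rfl) (by simp)
  -- (f,t,t,t)  TD
  · show q (Tm.dAndTo Frm.top) ⊚ Q.andQ (q Tm.kappa) (qid Frm.top) =
      q Tm.kappa ⊚ q (Tm.dAndTo Frm.bot)
    exact qdAnd_nat Tm.kappa
  -- (t,f,*,*) impossible
  · exact absurd (m₁ rfl) (by simp)
  · exact absurd (m₁ rfl) (by simp)
  · exact absurd (m₁ rfl) (by simp)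
  · exact absurd (m₁ rfl) (by simp)
  -- (t,t,f,f)
  · show q (Tm.sAndTo Frm.bot) ⊚ Q.andQ (qid Frm.top) (qid Frm.bot) =
      qid Frm.bot ⊚ q (Tm.sAndTo Frm.bot)
    rw [qand_id, qcomp_id, qid_comp]
  -- (t,t,f,t)  TE
  · show q (Tm.dAndTo Frm.top) ⊚ Q.andQ (qid Frm.top) (q Tm.kappa) =
      q Tm.kappa ⊚ q (Tm.sAndTo Frm.bot)
    rw [kAnd]
    exact qsAnd_nat Tm.kappa
  -- (t,t,t,f) impossible
  · exact absurd (m₂ rfl) (by simp)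
  -- (t,t,t,t)
  · show q (Tm.dAndTo Frm.top) ⊚ Q.andQ (qid Frm.top) (qid Frm.top) =
      qid Frm.top ⊚ q (Tm.dAndTo Frm.top)
    rw [qand_id, qcomp_id, qid_comp]

lemma qlnk_comp (a b c : Bool) (m₁ : a = true → b = true) (m₂ : b = true → c = true)
    (m : a = true → c = true) :
    qlnk b c m₂ ⊚ qlnk a b m₁ = qlnk a c m := by
  cases a <;> cases b <;> cases c
  · exact qid_comp _
  · exact qcomp_id _
  · exact absurd (m₂ rfl) (by simp)
  · exact qid_comp _
  · exact absurd (m₁ rfl) (by simp)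
  · exact absurd (m₁ rfl) (by simp)
  · exact absurd (m₂ rfl) (by simp)
  · exact qid_comp _

lemma qlnk_refl (a : Bool) (m : a = true → a = true) : qlnk a a m = qid (tv a) := by
  cases a <;> rfl

/-! ### The main normal-form theorem -/

theorem dswk_main : ∀ {A B : Frm} {f : Tm A B}, DSWK f → NoLtr A →
    NoLtr B ∧ (val A = true → val B = true) ∧
    ∀ (hA : NoLtr A) (hB : NoLtr B) (m : val A = true → val B = true),
      q f = q (nrmInv B hB) ⊚ (qlnk (val A) (val B) m ⊚ q (nrm A hA)) := by
  intro A B f hf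
  induction hf with
  | id A₀ =>
    intro h
    refine ⟨h, fun hv => hv, fun hA hB m => ?_⟩
    rw [qlnk_refl, qid_comp, qnrm_iso2 A₀ hB hA]
    rfl
  | kappa =>
    intro _
    refine ⟨trivial, fun _ => rfl, fun hA hB m => ?_⟩
    show q Tm.kappa = qid Frm.top ⊚ (q Tm.kappa ⊚ qid Frm.bot)
    rw [qid_comp, qcomp_id]
  | gen hg =>
    cases hg with
    | dOrTo =>
      rename_i B
      intro h
      refine ⟨h.1, fun hv => by simpa [val] using hv, fun hA hB m => ?_⟩
      show q (Tm.dOrTo B) = q (nrmInv B hB) ⊚ (qlnk (val B || false) (val B) m ⊚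
          (q (orStep (val B) false) ⊚ Q.orQ (q (nrm B hA.1)) (qid Frm.bot)))
      erw [← qassoc (qlnk (val B || false) (val B) m), qcompat_dOr (val B) m,
        qdOr_nat (nrm B hA.1), ← qassoc, qnrm_iso2 B hB hA.1, qid_comp]
    | dOrFrom =>
      rename_i A
      intro h
      refine ⟨⟨h, trivial⟩, fun hv => by simp [val, hv], fun hA hB m => ?_⟩
      show q (Tm.dOrFrom A) = (Q.orQ (q (nrmInv A hB.1)) (qid Frm.bot) ⊚
          q (orStepInv (val A) false)) ⊚ (qlnk (val A) (val A || false) m ⊚ q (nrm A hA))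
      erw [qassoc, ← qassoc (q (orStepInv (val A) false)), qcompat_dOr' (val A) m,
        ← qassoc, qdOrFrom_nat (nrmInv A hB.1), qassoc, qnrm_iso2 A hB.1 hA, qcomp_id]
    | sOrTo =>
      rename_i B
      intro h
      refine ⟨h.2, fun hv => by simpa [val] using hv, fun hA hB m => ?_⟩
      show q (Tm.sOrTo B) = q (nrmInv B hB) ⊚ (qlnk (false || val B) (val B) m ⊚
          (q (orStep false (val B)) ⊚ Q.orQ (qid Frm.bot) (q (nrm B hA.2))))
      erw [← qassoc (qlnk (false || val B) (val B) m), qcompat_sOr (val B) m,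
        qsOr_nat (nrm B hA.2), ← qassoc, qnrm_iso2 B hB hA.2, qid_comp]
    | sOrFrom =>
      rename_i A
      intro h
      refine ⟨⟨trivial, h⟩, fun hv => by simp [val, hv], fun hA hB m => ?_⟩
      show q (Tm.sOrFrom A) = (Q.orQ (qid Frm.bot) (q (nrmInv A hB.2)) ⊚
          q (orStepInv false (val A))) ⊚ (qlnk (val A) (false || val A) m ⊚ q (nrm A hA))
      erw [qassoc, ← qassoc (q (orStepInv false (val A))), qcompat_sOr' (val A) m,
        ← qassoc, qsOrFrom_nat (nrmInv A hB.2), qassoc, qnrm_iso2 A hB.2 hA, qcomp_id]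
    | dAndTo =>
      rename_i B
      intro h
      refine ⟨h.1, fun hv => by simpa [val] using hv, fun hA hB m => ?_⟩
      show q (Tm.dAndTo B) = q (nrmInv B hB) ⊚ (qlnk (val B && true) (val B) m ⊚
          (q (andStep (val B) true) ⊚ Q.andQ (q (nrm B hA.1)) (qid Frm.top)))
      erw [← qassoc (qlnk (val B && true) (val B) m), qcompat_dAnd (val B) m,
        qdAnd_nat (nrm B hA.1), ← qassoc, qnrm_iso2 B hB hA.1, qid_comp]
    | dAndFrom =>
      rename_i A
      intro h
      refine ⟨⟨h, trivial⟩, fun hv => by simp [val, hv], fun hA hB m => ?_⟩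
      show q (Tm.dAndFrom A) = (Q.andQ (q (nrmInv A hB.1)) (qid Frm.top) ⊚
          q (andStepInv (val A) true)) ⊚ (qlnk (val A) (val A && true) m ⊚ q (nrm A hA))
      erw [qassoc, ← qassoc (q (andStepInv (val A) true)), qcompat_dAnd' (val A) m,
        ← qassoc, qdAndFrom_nat (nrmInv A hB.1), qassoc, qnrm_iso2 A hB.1 hA, qcomp_id]
    | sAndTo =>
      rename_i B
      intro h
      refine ⟨h.2, fun hv => by simpa [val] using hv, fun hA hB m => ?_⟩
      show q (Tm.sAndTo B) = q (nrmInv B hB) ⊚ (qlnk (true && val B) (val B) m ⊚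
          (q (andStep true (val B)) ⊚ Q.andQ (qid Frm.top) (q (nrm B hA.2))))
      erw [← qassoc (qlnk (true && val B) (val B) m), qcompat_sAnd (val B) m,
        qsAnd_nat (nrm B hA.2), ← qassoc, qnrm_iso2 B hB hA.2, qid_comp]
    | sAndFrom =>
      rename_i A
      intro h
      refine ⟨⟨trivial, h⟩, fun hv => by simp [val, hv], fun hA hB m => ?_⟩
      show q (Tm.sAndFrom A) = (Q.andQ (qid Frm.top) (q (nrmInv A hB.2)) ⊚
          q (andStepInv true (val A))) ⊚ (qlnk (val A) (true && val A) m ⊚ q (nrm A hA))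
      erw [qassoc, ← qassoc (q (andStepInv true (val A))), qcompat_sAnd' (val A) m,
        ← qassoc, qsAndFrom_nat (nrmInv A hB.2), qassoc, qnrm_iso2 A hB.2 hA, qcomp_id]
    | wAndTo =>
      intro _
      refine ⟨trivial, fun hv => by simp [val] at hv, fun hA hB m => ?_⟩
      show q Tm.wAndTo = qid Frm.bot ⊚ (qid Frm.bot ⊚
          (q Tm.wAndTo ⊚ Q.andQ (qid Frm.bot) (qid Frm.bot)))
      simp only [qand_id, qid_comp, qcomp_id]
    | wAndFrom =>
      intro _
      refine ⟨⟨trivial, trivial⟩, fun hv => by simp [val] at hv, fun hA hB m => ?_⟩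
      show q Tm.wAndFrom = (Q.andQ (qid Frm.bot) (qid Frm.bot) ⊚ q Tm.wAndFrom) ⊚
          (qid Frm.bot ⊚ qid Frm.bot)
      simp only [qand_id, qid_comp, qcomp_id]
    | wOrTo =>
      intro _
      refine ⟨trivial, fun _ => rfl, fun hA hB m => ?_⟩
      show q Tm.wOrTo = qid Frm.top ⊚ (qid Frm.top ⊚
          (q Tm.wOrTo ⊚ Q.orQ (qid Frm.top) (qid Frm.top)))
      simp only [qor_id, qid_comp, qcomp_id]
    | wOrFrom =>
      intro _
      refine ⟨⟨trivial, trivial⟩, fun _ => rfl, fun hA hB m => ?_⟩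
      show q Tm.wOrFrom = (Q.orQ (qid Frm.top) (qid Frm.top) ⊚ q Tm.wOrFrom) ⊚
          (qid Frm.top ⊚ qid Frm.top)
      simp only [qor_id, qid_comp, qcomp_id]
  | @comp A B C g f hg hf ihg ihf =>
    intro hA
    obtain ⟨hBmid, m₁, e₁⟩ := ihf hA
    obtain ⟨hC, m₂, e₂⟩ := ihg hBmid
    refine ⟨hC, fun hv => m₂ (m₁ hv), fun hA' hC' m => ?_⟩
    rw [q_comp, e₁ hA' hBmid m₁, e₂ hBmid hC' m₂]
    simp only [qassoc]
    rw [← qassoc (q (nrm B hBmid)), qnrm_iso1 B hBmid hBmid, qid_comp,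
      ← qassoc (qlnk (val B) (val C) m₂), qlnk_comp (val A) (val B) (val C) m₁ m₂ m]
  | @orM A B C D f g hf hg ihf ihg =>
    intro hAC
    obtain ⟨hB, m₁, e₁⟩ := ihf hAC.1
    obtain ⟨hD, m₂, e₂⟩ := ihg hAC.2
    refine ⟨⟨hB, hD⟩, ?_, fun hA' hB' m => ?_⟩
    · intro hv
      simp only [val, Bool.or_eq_true] at hv ⊢
      exact hv.imp m₁ m₂
    · show q (f.orM g) = (Q.orQ (q (nrmInv B hB'.1)) (q (nrmInv D hB'.2)) ⊚
          q (orStepInv (val B) (val D))) ⊚ (qlnk (val A || val C) (val B || val D) m ⊚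
          (q (orStep (val A) (val C)) ⊚ Q.orQ (q (nrm A hA'.1)) (q (nrm C hA'.2))))
      rw [q_or, e₁ hA'.1 hB'.1 m₁, e₂ hA'.2 hB'.2 m₂, qor_comp, qor_comp]
      have key : Q.orQ (qlnk (val A) (val B) m₁) (qlnk (val C) (val D) m₂) =
          q (orStepInv (val B) (val D)) ⊚ (qlnk (val A || val C) (val B || val D) m ⊚
            q (orStep (val A) (val C))) := by
        rw [← qorKey (val A) (val B) (val C) (val D) m₁ m₂ m, ← qassoc,
          qorStep_iso2, qid_comp]
      rw [key]
      simp only [qassoc]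
  | @andM A B C D f g hf hg ihf ihg =>
    intro hAC
    obtain ⟨hB, m₁, e₁⟩ := ihf hAC.1
    obtain ⟨hD, m₂, e₂⟩ := ihg hAC.2
    refine ⟨⟨hB, hD⟩, ?_, fun hA' hB' m => ?_⟩
    · intro hv
      simp only [val, Bool.and_eq_true] at hv ⊢
      exact ⟨m₁ hv.1, m₂ hv.2⟩
    · show q (f.andM g) = (Q.andQ (q (nrmInv B hB'.1)) (q (nrmInv D hB'.2)) ⊚
          q (andStepInv (val B) (val D))) ⊚ (qlnk (val A && val C) (val B && val D) m ⊚
          (q (andStep (val A) (val C)) ⊚ Q.andQ (q (nrm A hA'.1)) (q (nrm C hA'.2))))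
      rw [q_and, e₁ hA'.1 hB'.1 m₁, e₂ hA'.2 hB'.2 m₂, qand_comp, qand_comp]
      have key : Q.andQ (qlnk (val A) (val B) m₁) (qlnk (val C) (val D) m₂) =
          q (andStepInv (val B) (val D)) ⊚ (qlnk (val A && val C) (val B && val D) m ⊚
            q (andStep (val A) (val C))) := by
        rw [← qandKey (val A) (val B) (val C) (val D) m₁ m₂ m, ← qassoc,
          qandStep_iso2, qid_comp]
      rw [key]
      simp only [qassoc]

/-- In 𝓜 , if no letter occurs in `A` and `B`, then every arrow term
`f : A → B` defined by δ, σ, w and κ is either equal to an N_{⊤,⊥}-term or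
equal to `h'' ∘ κ ∘ h'` for N_{⊤,⊥}-terms `h'`, `h''`; consequently any two
such arrow terms `f, g : A → B` are equal in 𝓜 . -/
theorem dswk_terms_between_letterless_objects {A B : Frm}
    (hA : NoLtr A) (hB : NoLtr B) :
    (∀ f : Tm A B, DSWK f →
      (∃ g : Tm A B, NTm g ∧ MEq f g) ∨
      (∃ (h₁ : Tm A Frm.bot) (h₂ : Tm Frm.top B), NTm h₁ ∧ NTm h₂ ∧
        MEq f (h₂.comp (Tm.kappa.comp h₁)))) ∧
    (∀ f g : Tm A B, DSWK f → DSWK g → MEq f g) := by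
  constructor
  · intro f hf
    obtain ⟨_, m, e⟩ := dswk_main hf hA
    have he : MEq f ((nrmInv B hB).comp ((lnk (val A) (val B) m).comp (nrm A hA))) :=
      Quotient.exact (e hA hB m)
    have hn₁ : NTm (nrm A hA) := nrm_ntm A hA
    have hn₂ : NTm (nrmInv B hB) := nrmInv_ntm B hB
    revert he hn₁ hn₂
    generalize nrm A hA = n₁
    generalize nrmInv B hB = n₂
    revert m n₁ n₂
    cases val A <;> cases val B <;> intro m n₁ n₂ he hn₁ hn₂
    · exact Or.inl ⟨_, NTm.comp hn₂ (NTm.comp (NTm.id _) hn₁), he⟩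
    · exact Or.inr ⟨n₁, n₂, hn₁, hn₂, he⟩
    · exact absurd (m rfl) (by simp)
    · exact Or.inl ⟨_, NTm.comp hn₂ (NTm.comp (NTm.id _) hn₁), he⟩
  · intro f g hf hg
    obtain ⟨_, m, e₁⟩ := dswk_main hf hA
    obtain ⟨_, _, e₂⟩ := dswk_main hg hA
    exact Quotient.exact ((e₁ hA hB m).trans (e₂ hA hB m).symm)

end SMI
end

section
/- In the free SMI category M, for every arrow f : A → B: if A is ⊥-pure then B is ⊥-pure, and if B is ⊤-pure then A is ⊤-pure. Consequently, if f : A → B and g : B → C are arrows with A and C pure, then B is pure. -/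
namespace SMI

/-- Normalized disjunction : `B∨⊥ ↦ B`, `⊥∨B ↦ B`, `⊤∨⊤ ↦ ⊤`. -/
def orN : Frm → Frm → Frm
  | Frm.bot, B => B
  | A, Frm.bot => A
  | Frm.top, Frm.top => Frm.top
  | A, B => A.or B

/-- Normalized conjunction : `B∧⊤ ↦ B`, `⊤∧B ↦ B`, `⊥∧⊥ ↦ ⊥`. -/
def andN : Frm → Frm → Frm
  | Frm.top, B => B
  | A, Frm.top => A
  | Frm.bot, Frm.bot => Frm.bot
  | A, B => A.and B

/-- The unit-normal form ν(A), obtained by iterated replacing of subformulas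
`B∨⊥`, `⊥∨B`, `B∧⊤`, `⊤∧B` by `B`, of `⊥∧⊥` by `⊥` and of `⊤∨⊤` by `⊤`. -/
def nu : Frm → Frm
  | Frm.or A B => orN (nu A) (nu B)
  | Frm.and A B => andN (nu A) (nu B)
  | A => A

/-- `⊥` occurs in the formula. -/
def hasBot : Frm → Prop
  | Frm.bot => True
  | Frm.pl _ => False
  | Frm.top => False
  | Frm.or A B => hasBot A ∨ hasBot B
  | Frm.and A B => hasBot A ∨ hasBot B

/-- `⊤` occurs in the formula. -/
def hasTop : Frm → Prop
  | Frm.top => True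
  | Frm.pl _ => False
  | Frm.bot => False
  | Frm.or A B => hasTop A ∨ hasTop B
  | Frm.and A B => hasTop A ∨ hasTop B

/-- `A` is ⊥-pure : there is no occurrence of `⊥` in ν(A). -/
def BotPure (A : Frm) : Prop := ¬ hasBot (nu A)

/-- `A` is ⊤-pure : there is no occurrence of `⊤` in ν(A). -/
def TopPure (A : Frm) : Prop := ¬ hasTop (nu A)

/-- `A` is pure : both ⊥-pure and ⊤-pure. -/
def Pure (A : Frm) : Prop := BotPure A ∧ TopPure A

end SMI

namespace SMI

/-- Boolean version of `hasBot`. -/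
def hbF : Frm → Bool
  | Frm.bot => true
  | Frm.pl _ => false
  | Frm.top => false
  | Frm.or A B => hbF A || hbF B
  | Frm.and A B => hbF A || hbF B

/-- Boolean version of `hasTop`. -/
def htF : Frm → Bool
  | Frm.top => true
  | Frm.pl _ => false
  | Frm.bot => false
  | Frm.or A B => htF A || htF B
  | Frm.and A B => htF A || htF B

lemma hasBot_iff (X : Frm) : hasBot X ↔ hbF X = true := by
  induction X <;> simp [hasBot, hbF, *]

lemma hasTop_iff (X : Frm) : hasTop X ↔ htF X = true := by
  induction X <;> simp [hasTop, htF, *]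

/-- The finite classification of a formula: exactly `⊥`, exactly `⊤`,
or other, recording whether `⊥`/`⊤` occur. -/
inductive C : Type
  | bot : C
  | top : C
  | oth : Bool → Bool → C
  deriving DecidableEq, Fintype

def C.hb : C → Bool
  | .bot => true
  | .top => false
  | .oth b _ => b

def C.ht : C → Bool
  | .bot => false
  | .top => true
  | .oth _ t => t

def C.orC : C → C → C
  | .bot, y => y
  | x, .bot => x
  | .top, .top => .top
  | x, y => .oth (x.hb || y.hb) (x.ht || y.ht)

def C.andC : C → C → C
  | .top, y => y
  | x, .top => x
  | .bot, .bot => .bot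
  | x, y => .oth (x.hb || y.hb) (x.ht || y.ht)

/-- The classification of a (ν-normal) formula. -/
def clF (X : Frm) : C :=
  if X = Frm.bot then C.bot else if X = Frm.top then C.top else C.oth (hbF X) (htF X)

lemma clF_orN (a b : Frm) : clF (orN a b) = (clF a).orC (clF b) := by
  cases a <;> cases b <;>
    simp [orN, clF, hbF, htF, C.orC, C.hb, C.ht]

lemma clF_andN (a b : Frm) : clF (andN a b) = (clF a).andC (clF b) := by
  cases a <;> cases b <;>
    simp [andN, clF, hbF, htF, C.andC, C.hb, C.ht]

/-- The classification of an arbitrary formula (computed compositionally). -/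
def cl : Frm → C
  | Frm.bot => C.bot
  | Frm.top => C.top
  | Frm.pl _ => C.oth false false
  | Frm.or A B => (cl A).orC (cl B)
  | Frm.and A B => (cl A).andC (cl B)

lemma cl_eq (A : Frm) : cl A = clF (nu A) := by
  induction A with
  | pl n => rfl
  | bot => rfl
  | top => rfl
  | or A B ihA ihB => simp [cl, nu, clF_orN, ihA, ihB]
  | and A B ihA ihB => simp [cl, nu, clF_andN, ihA, ihB]

lemma hb_clF (X : Frm) : (clF X).hb = hbF X := by
  unfold clF
  split_ifs with h1 h2 <;> first | (subst h1; rfl) | (subst h2; rfl) | rfl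

lemma ht_clF (X : Frm) : (clF X).ht = htF X := by
  unfold clF
  split_ifs with h1 h2 <;> first | (subst h1; rfl) | (subst h2; rfl) | rfl

lemma botPure_iff (A : Frm) : BotPure A ↔ (cl A).hb = false := by
  rw [BotPure, hasBot_iff, cl_eq, hb_clF]
  simp

lemma topPure_iff (A : Frm) : TopPure A ↔ (cl A).ht = false := by
  rw [TopPure, hasTop_iff, cl_eq, ht_clF]
  simp

/-- The invariant relation on classifications preserved by arrows. -/
def R (x y : C) : Bool :=
  (!y.hb || x.hb) && (!x.ht || y.ht) &&
  (!(x == C.bot) || (y == C.bot || y == C.top)) &&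
  (!(y == C.top) || (x == C.bot || x == C.top)) &&
  (!(y == C.bot) || (x == C.bot)) &&
  (!(x == C.top) || (y == C.top))

lemma R_refl : ∀ x : C, R x x = true := by decide
lemma R_trans : ∀ x y z : C, R x y = true → R y z = true → R x z = true := by decide
lemma R_or : ∀ x y x' y' : C, R x y = true → R x' y' = true →
    R (x.orC x') (y.orC y') = true := by decide
lemma R_and : ∀ x y x' y' : C, R x y = true → R x' y' = true →
    R (x.andC x') (y.andC y') = true := by decide
lemma R_orAssoc1 : ∀ x y z : C, R (x.orC (y.orC z)) ((x.orC y).orC z) = true := by decide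
lemma R_orAssoc2 : ∀ x y z : C, R ((x.orC y).orC z) (x.orC (y.orC z)) = true := by decide
lemma R_andAssoc1 : ∀ x y z : C, R (x.andC (y.andC z)) ((x.andC y).andC z) = true := by decide
lemma R_andAssoc2 : ∀ x y z : C, R ((x.andC y).andC z) (x.andC (y.andC z)) = true := by decide
lemma R_orComm : ∀ x y : C, R (x.orC y) (y.orC x) = true := by decide
lemma R_andComm : ∀ x y : C, R (x.andC y) (y.andC x) = true := by decide
lemma R_dOr1 : ∀ x : C, R (x.orC C.bot) x = true := by decide
lemma R_dOr2 : ∀ x : C, R x (x.orC C.bot) = true := by decide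
lemma R_sOr1 : ∀ x : C, R (C.bot.orC x) x = true := by decide
lemma R_sOr2 : ∀ x : C, R x (C.bot.orC x) = true := by decide
lemma R_dAnd1 : ∀ x : C, R (x.andC C.top) x = true := by decide
lemma R_dAnd2 : ∀ x : C, R x (x.andC C.top) = true := by decide
lemma R_sAnd1 : ∀ x : C, R (C.top.andC x) x = true := by decide
lemma R_sAnd2 : ∀ x : C, R x (C.top.andC x) = true := by decide
lemma R_ck : ∀ a b c d : C,
    R ((a.andC b).orC (c.andC d)) ((a.orC c).andC (b.orC d)) = true := by decide
lemma R_hbLe : ∀ x y : C, R x y = true → y.hb = true → x.hb = true := by decide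
lemma R_htLe : ∀ x y : C, R x y = true → x.ht = true → y.ht = true := by decide

/-- Every arrow term relates the classifications of its source and target. -/
lemma key : ∀ {A B : Frm}, Tm A B → R (cl A) (cl B) = true := by
  intro A B f
  induction f with
  | id A => exact R_refl _
  | comp g f ihg ihf => exact R_trans _ _ _ ihf ihg
  | orM f g ihf ihg => exact R_or _ _ _ _ ihf ihg
  | andM f g ihf ihg => exact R_and _ _ _ _ ihf ihg
  | bOrTo A B C => exact R_orAssoc1 (cl A) (cl B) (cl C)
  | bOrFrom A B C => exact R_orAssoc2 (cl A) (cl B) (cl C)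
  | bAndTo A B C => exact R_andAssoc1 (cl A) (cl B) (cl C)
  | bAndFrom A B C => exact R_andAssoc2 (cl A) (cl B) (cl C)
  | cOr A B => exact R_orComm (cl A) (cl B)
  | cAnd A B => exact R_andComm (cl A) (cl B)
  | dOrTo A => exact R_dOr1 (cl A)
  | dOrFrom A => exact R_dOr2 (cl A)
  | sOrTo A => exact R_sOr1 (cl A)
  | sOrFrom A => exact R_sOr2 (cl A)
  | dAndTo A => exact R_dAnd1 (cl A)
  | dAndFrom A => exact R_dAnd2 (cl A)
  | sAndTo A => exact R_sAnd1 (cl A)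
  | sAndFrom A => exact R_sAnd2 (cl A)
  | ck A B C D => exact R_ck (cl A) (cl B) (cl C) (cl D)
  | wAndTo => decide
  | wAndFrom => decide
  | wOrTo => decide
  | wOrFrom => decide
  | kappa => decide

/-- Lemma 3.5 and its corollary : for every arrow `f : A → B` of 𝓜 , if `A`
is ⊥-pure then `B` is ⊥-pure, and if `B` is ⊤-pure then `A` is ⊤-pure;
consequently, if `f : A → B` and `g : B → C` are arrows with `A` and `C`
pure, then `B` is pure. -/
theorem purity_along_arrows :
    (∀ {A B : Frm}, Tm A B → (BotPure A → BotPure B) ∧ (TopPure B → TopPure A)) ∧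
    (∀ {A B C : Frm}, Tm A B → Tm B C → Pure A → Pure C → Pure B) := by
  have main : ∀ {A B : Frm}, Tm A B → (BotPure A → BotPure B) ∧ (TopPure B → TopPure A) := by
    intro A B f
    constructor
    · intro hA
      rw [botPure_iff] at hA ⊢
      by_contra h
      simp only [Bool.not_eq_false] at h
      have := R_hbLe _ _ (key f) h
      rw [hA] at this
      exact Bool.false_ne_true this
    · intro hB
      rw [topPure_iff] at hB ⊢
      by_contra h
      simp only [Bool.not_eq_false] at h
      have := R_htLe _ _ (key f) h
      rw [hB] at this
      exact Bool.false_ne_true this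
  refine ⟨main, ?_⟩
  intro A B C f g hA hC
  exact ⟨(main f).1 hA.1, (main g).2 hC.2⟩

end SMI
end
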